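/- arXiv:1711.10239 — 3 statements merged into one kernel-verified Lean document; each statement's English description precedes it below -/
import Mathlib

section
/- Functoriality of the decorated-tree inner product construction with respect to adjoints (Lemma 'lem: adjoint identity'): Let 𝖭 and 𝖭' be node-species sets equipped with real inner products on the free vector spaces ⟨𝖭⟩ and ⟨𝖭'⟩, let 𝖤 be a set of edge species, and let A: ⟨𝖭⟩ → ⟨𝖭'⟩ be a linear map admitting an adjoint A*: ⟨𝖭'⟩ → ⟨𝖭⟩, i.e. ⟨A Y, Y'⟩ = ⟨Y, A* Y'⟩ for all Y ∈ 𝖭 and Y' ∈ 𝖭'. Then 𝔗(A*) is the adjoint of 𝔗(A): for all trees τ ∈ 𝒯(𝖭,𝖤) and σ ∈ 𝒯(𝖭',𝖤) one has ⟨𝔗(A) τ, σ⟩ = ⟨τ, 𝔗(A*) σ⟩. -/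
/-
Common framework: multi-indices, the algebra of smooth functions on ℝ^𝒪,
and the spaces of decorated trees 𝒱 and 𝔅 of [Bruned–Chandra–Chevyrev–Hairer,
"Renormalising SPDEs in regularity structures"], presented abstractly together
with the defining recursions of the various operators on them.
-/

open scoped BigOperators Classical

namespace SPDERenorm

/-! ### Multi-indices in `ℕ^{d+1}` -/

abbrev MIdx (d : ℕ) := Fin (d+1) → ℕ

/-- `k! = ∏ᵢ k[i]!`. -/
def mfact {d : ℕ} (k : MIdx d) : ℕ := ∏ i, Nat.factorial (k i)

/-- `C(k,ℓ) = ∏ᵢ binom(k[i], ℓ[i])`. -/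
def mchoose {d : ℕ} (k l : MIdx d) : ℕ := ∏ i, Nat.choose (k i) (l i)

/-- `|k| = Σᵢ k[i]`. -/
def msize {d : ℕ} (k : MIdx d) : ℕ := ∑ i, k i

/-- The unit multi-index `e_i`. -/
def munit {d : ℕ} (i : Fin (d+1)) : MIdx d := Pi.single i 1

/-- Sum of `f ℓ` over all multi-indices `ℓ ≤ m` (componentwise). -/
noncomputable def msum {d : ℕ} {A : Type*} [AddCommMonoid A] (m : MIdx d) (f : MIdx d → A) : A :=
  ∑ e : (∀ i : Fin (d+1), Fin (m i + 1)), f fun i => (e i : ℕ)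

/-- The scaled size `|k|_𝔰 = Σᵢ k[i]·𝔰ᵢ`. -/
noncomputable def wdeg {d : ℕ} (s : Fin (d+1) → ℝ) (k : MIdx d) : ℝ := ∑ i, (k i : ℝ) * s i

/-- The index set `𝒪 = 𝔏₊ × ℕ^{d+1}`. -/
abbrev Odx (Lp : Type) (d : ℕ) := Lp × MIdx d

/-! ### Functions on `ℝ^𝒪` and differential operators -/

/-- Real-valued functions on `ℝ^𝒪`. -/
abbrev FnO (Lp : Type) (d : ℕ) := (Odx Lp d → ℝ) → ℝ

/-- The coordinate function `𝒳_o`. -/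
def Xc {Lp : Type} {d : ℕ} (o : Odx Lp d) : FnO Lp d := fun x => x o

/-- The partial derivative `D_o` in the `o`-th coordinate. -/
noncomputable def Dpart {Lp : Type} {d : ℕ} [DecidableEq Lp] (o : Odx Lp d) (F : FnO Lp d) :
    FnO Lp d :=
  fun x => deriv (fun t : ℝ => F (Function.update x o t)) (x o)

/-- Iterated partial derivatives `D_{o₁} ∘ ⋯ ∘ D_{oₙ}` over a list. -/
noncomputable def Dlist {Lp : Type} {d : ℕ} [DecidableEq Lp] (L : List (Odx Lp d))
    (F : FnO Lp d) : FnO Lp d :=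
  L.foldr Dpart F

/-- The derivation `∂_i F = Σ_{(𝔱,p)} 𝒳_{(𝔱,p+e_i)} · D_{(𝔱,p)} F`. -/
noncomputable def pderivO {Lp : Type} {d : ℕ} [DecidableEq Lp] (i : Fin (d+1)) (F : FnO Lp d) :
    FnO Lp d :=
  fun x => ∑ᶠ o : Odx Lp d, Xc (o.1, o.2 + munit i) x * Dpart o F x

/-- `∂^k = ∏ᵢ ∂ᵢ^{k[i]}`. -/
noncomputable def mpderiv {Lp : Type} {d : ℕ} [DecidableEq Lp] (k : MIdx d) (F : FnO Lp d) :
    FnO Lp d :=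
  (List.finRange (d+1)).foldr (fun i G => (pderivO i)^[k i] G) F

/-- `D^α` for a finitely supported `α ∈ ℕ^𝒪`. -/
noncomputable def Dexp {Lp : Type} {d : ℕ} [DecidableEq Lp] (α : Odx Lp d →₀ ℕ)
    (F : FnO Lp d) : FnO Lp d :=
  Dlist (Finsupp.toMultiset α).toList F

/-- `α! = ∏_o α[o]!`. -/
def afact {Lp : Type} {d : ℕ} (α : Odx Lp d →₀ ℕ) : ℕ := α.prod fun _ n => Nat.factorial n

/-- The monomial `𝒳^α`. -/
noncomputable def Xpow {Lp : Type} {d : ℕ} (α : Odx Lp d →₀ ℕ) : FnO Lp d :=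
  fun x => α.prod fun o n => x o ^ n

/-- `F` depends only on the coordinates in `s`. -/
def DependsOnlyOn {Lp : Type} {d : ℕ} (F : FnO Lp d) (s : Set (Odx Lp d)) : Prop :=
  ∀ x y, (∀ o ∈ s, x o = y o) → F x = F y

/-- Membership in `𝒞_𝒪`: smooth functions depending on finitely many coordinates. -/
def IsSmoothCO {Lp : Type} {d : ℕ} (F : FnO Lp d) : Prop :=
  ∃ (s : Finset (Odx Lp d)) (g : (↥s → ℝ) → ℝ),
    ContDiff ℝ (⊤ : ℕ∞) g ∧ ∀ x, F x = g fun o => x o.1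

/-- Membership in `𝒫 ⊆ 𝒞_𝒪` (relative to the partition `𝒪 = 𝒪₊ ⊔ 𝒪₋`). -/
def IsP {Lp : Type} {d : ℕ} (Om Op : Set (Odx Lp d)) (F : FnO Lp d) : Prop :=
  ∃ (m : ℕ) (α : Fin m → (Odx Lp d →₀ ℕ)) (G : Fin m → FnO Lp d),
    Function.Injective α ∧
    (∀ j, ∀ o ∈ (α j).support, o ∈ Om) ∧
    (∀ j, IsSmoothCO (G j)) ∧
    (∀ j, G j ≠ 0) ∧
    (∀ j, DependsOnlyOn (G j) Op) ∧
    F = fun x => ∑ j, G j x * Xpow (α j) x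

/-- `F` is a real polynomial in finitely many of the coordinate functions. -/
def IsPolyFn {Lp : Type} {d : ℕ} (F : FnO Lp d) : Prop :=
  ∃ (s : Finset (Odx Lp d)) (P : MvPolynomial (↥s) ℝ),
    ∀ x, F x = MvPolynomial.eval (fun o => x o.1) P

/-! ### The trees of `𝒱` -/

/-- The set `𝒱` of decorated rooted trees, presented abstractly: a tree is uniquely
built from a root decoration `(𝔩,k) ∈ 𝔇 × ℕ^{d+1}` and a multiset of decorated branches,
and every tree arises this way (induction). -/
structure TreeV (Lp Dr : Type) (d : ℕ) where
  V : Type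
  node : Dr → MIdx d → Multiset (Odx Lp d × V) → V
  node_bij : Function.Bijective
    (fun x : Dr × MIdx d × Multiset (Odx Lp d × V) => node x.1 x.2.1 x.2.2)
  ind : ∀ P : V → Prop,
    (∀ l k (M : Multiset (Odx Lp d × V)), (∀ x ∈ M, P x.2) → P (node l k M)) → ∀ τ, P τ

namespace TreeV

variable {Lp Dr : Type} {d : ℕ} (S : TreeV Lp Dr d)

/-- Rebuild a tree after replacing the `j`-th branch by a linear combination of trees. -/
noncomputable def replace (l : Dr) (k : MIdx d) (L : List (Odx Lp d × S.V))
    (j : Fin L.length) (w : S.V →₀ ℝ) : S.V →₀ ℝ :=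
  w.sum fun τ' c => Finsupp.single (S.node l k (↑(L.set j ((L.get j).1, τ')))) c

/-- Decomposition of a tree into its root decoration and branches. -/
noncomputable def dec : S.V ≃ Dr × MIdx d × Multiset (Odx Lp d × S.V) :=
  (Equiv.ofBijective _ S.node_bij).symm

/-- The polynomial decoration at the root. -/
noncomputable def polyOf (τ : S.V) : MIdx d := (S.dec τ).2.1

/-- The multiset of branches at the root. -/
noncomputable def branchesOf (τ : S.V) : Multiset (Odx Lp d × S.V) := (S.dec τ).2.2

/-- The commutative tree product merging the roots of `g 0, …, g (n-1)`
(adding the polynomial decorations), the merged root receiving the driver label `l`. -/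
noncomputable def merge (l : Dr) {n : ℕ} (g : Fin n → S.V) : S.V :=
  S.node l (∑ r, S.polyOf (g r)) (∑ r, S.branchesOf (g r))

/-- Defining recursion of the grafting operators `⋖̂_o : 𝕍 ⊗ 𝕍 → 𝕍`. -/
def GraftSpec [DecidableEq Lp] (graft : Odx Lp d → S.V → S.V → (S.V →₀ ℝ)) : Prop :=
  ∀ (t : Lp) (p : MIdx d) (τ : S.V) (l : Dr) (k : MIdx d) (L : List (Odx Lp d × S.V)),
    graft (t, p) τ (S.node l k ↑L) =
      msum (k ⊓ p) (fun ℓ =>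
        (mchoose k ℓ : ℝ) •
          Finsupp.single (S.node l (k - ℓ) (((t, p - ℓ), τ) ::ₘ (↑L : Multiset _))) 1)
      + ∑ j : Fin L.length, S.replace l k L j (graft (t, p) τ (L.get j).2)

/-- Defining recursion of the symmetry factor `S(τ)`. -/
def SymSpec [DecidableEq Lp] [DecidableEq S.V] (sym : S.V → ℕ) : Prop :=
  ∀ (l : Dr) (k : MIdx d) (M : Multiset (Odx Lp d × S.V)),
    sym (S.node l k M) =
      mfact k * ∏ x ∈ M.toFinset, Nat.factorial (M.count x) * sym x.2 ^ M.count x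

/-- Defining recursion of the inner product on `𝕍`. -/
def IPSpec (ip : S.V → S.V → ℝ) : Prop :=
  ∀ (l l' : Dr) (k k' : MIdx d) (L L' : List (Odx Lp d × S.V)),
    ip (S.node l k ↑L) (S.node l' k' ↑L') =
      (if l = l' ∧ k = k' then (mfact k : ℝ) else 0) *
        ∑ s : Fin L.length ≃ Fin L'.length,
          ∏ j : Fin L.length,
            (if (L.get j).1 = (L'.get (s j)).1 then ip (L.get j).2 (L'.get (s j)).2 else 0)

/-- Defining recursion of `Υ^F`. -/
def UpsSpec [DecidableEq Lp] (F : Lp → Dr → FnO Lp d) (Ups : Lp → S.V → FnO Lp d) : Prop :=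
  ∀ (t : Lp) (l : Dr) (k : MIdx d) (L : List (Odx Lp d × S.V)),
    Ups t (S.node l k ↑L) = fun x =>
      (∏ j : Fin L.length, Ups (L.get j).1.1 (L.get j).2 x) *
        mpderiv k (Dlist (L.map Prod.fst) (F t l)) x

/-- Defining recursion of the raising operator `↑̂_i` on `𝕍`. -/
def RaiseSpec (raise : Fin (d+1) → S.V → (S.V →₀ ℝ)) : Prop :=
  ∀ (i : Fin (d+1)) (l : Dr) (k : MIdx d) (L : List (Odx Lp d × S.V)),
    raise i (S.node l k ↑L) =
      Finsupp.single (S.node l (k + munit i) ↑L) 1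
      + ∑ j : Fin L.length, S.replace l k L j (raise i (L.get j).2)

/-- Defining recursion of the cutting operator `⋖̂*_o : 𝕍 → 𝕍 ⊗ 𝕍` (elements of
`𝕍 ⊗ 𝕍` represented as finitely supported functions on pairs of trees, a pair
`(branch, trunk)` recording a cut). -/
def CutSpec [DecidableEq Lp] (cut : Odx Lp d → S.V → (S.V × S.V →₀ ℝ)) : Prop :=
  ∀ (t : Lp) (p : MIdx d) (l : Dr) (k : MIdx d) (L : List (Odx Lp d × S.V)),
    cut (t, p) (S.node l k ↑L) =
      (∑ j : Fin L.length,
        if (L.get j).1.1 = t ∧ (L.get j).1.2 ≤ p then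
          ((mfact (p - (L.get j).1.2) : ℝ))⁻¹ •
            Finsupp.single ((L.get j).2,
              S.node l (k + (p - (L.get j).1.2)) ↑(L.eraseIdx j)) 1
        else 0)
      + ∑ j : Fin L.length,
          (cut (t, p) (L.get j).2).sum fun ab c =>
            Finsupp.single (ab.1, S.node l k ↑(L.set j ((L.get j).1, ab.2))) c

/-- Defining recursion of the lowering operator `↑̂*_i` on `𝕍`. -/
def LowSpec (low : Fin (d+1) → S.V → (S.V →₀ ℝ)) : Prop :=
  ∀ (i : Fin (d+1)) (l : Dr) (k : MIdx d) (L : List (Odx Lp d × S.V)),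
    low i (S.node l k ↑L) =
      (k i : ℝ) • Finsupp.single (S.node l (k - munit i) ↑L) 1
      + ∑ j : Fin L.length, S.replace l k L j (low i (L.get j).2)

/-- Defining recursion of the predicate "`τ` is `𝔱`-non-vanishing for `F`". -/
def NVSpec [DecidableEq Lp] (F : Lp → Dr → FnO Lp d) (NV : Lp → S.V → Prop) : Prop :=
  ∀ (t : Lp) (l : Dr) (k : MIdx d) (L : List (Odx Lp d × S.V)),
    NV t (S.node l k ↑L) ↔
      (mpderiv k (Dlist (L.map Prod.fst) (F t l)) ≠ 0 ∧
        ∀ j : Fin L.length, NV (L.get j).1.1 (L.get j).2)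

/-- The coefficient series of `U_o − u_o·𝟏`, for the jet `U` with Taylor coefficients `u`
and planted-tree coefficients `c_𝔱(τ)/S(τ)`. -/
noncomputable def uSeries (z : Dr) (u : Odx Lp d → ℝ) (c : Lp → S.V → ℝ) (sym : S.V → ℕ)
    (o : Odx Lp d) (σ : S.V) : ℝ :=
  (∑ᶠ q : MIdx d, if q ≠ 0 ∧ σ = S.node z q 0 then u (o.1, o.2 + q) / (mfact q : ℝ) else 0) +
  ∑ᶠ τ : S.V, if σ = S.node z 0 {(o, τ)} then c o.1 τ / (sym τ : ℝ) else 0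

/-- The coefficient series of the product `(U − u·𝟏)^α · Ξ_l`, expanded by multilinearity
using the commutative tree product merging the roots. -/
noncomputable def powCoef (coef : Odx Lp d → S.V → ℝ) (l : Dr) (α : Odx Lp d →₀ ℕ)
    (σ : S.V) : ℝ :=
  ∑ᶠ g : Fin (Finsupp.toMultiset α).toList.length → S.V,
    (∏ r, coef ((Finsupp.toMultiset α).toList.get r) (g r)) *
      (if σ = S.merge l g then 1 else 0)

/-- The coefficient series of `Σ_{𝔩∈𝔇} F^𝔩_𝔱(U)·Ξ_𝔩`, where
`F^𝔩_𝔱(U)·Ξ_𝔩 = Σ_α (D^α F^𝔩_𝔱(u)/α!)·(U − u·𝟏)^α·Ξ_𝔩`. -/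
noncomputable def lhsCoef [DecidableEq Lp] (F : Lp → Dr → FnO Lp d) (u : Odx Lp d → ℝ)
    (coef : Odx Lp d → S.V → ℝ) (t : Lp) (σ : S.V) : ℝ :=
  ∑ᶠ l : Dr, ∑ᶠ α : Odx Lp d →₀ ℕ,
    Dexp α (F t l) u / (afact α : ℝ) * S.powCoef coef l α σ

/-- Defining recursion of the 𝔰-degree `|·|_𝔰` of decorated trees (with driver labels in
`𝔏₋ ⊔ {𝟎}`, encoded as `Option Lm` with `none = 𝟎`). -/
def DegSpec {Lm : Type} (S : TreeV Lp (Option Lm) d) (s : Fin (d+1) → ℝ)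
    (degL : Lp → ℝ) (degLm : Lm → ℝ) (deg : S.V → ℝ) : Prop :=
  ∀ (l : Option Lm) (k : MIdx d) (M : Multiset (Odx Lp d × S.V)),
    deg (S.node l k M) =
      l.elim 0 degLm + wdeg s k +
        ((M.map fun x => (degL x.1.1 - wdeg s x.1.2) + deg x.2).sum)

end TreeV

/-! ### The trees of `𝔅` -/

/-- Polynomial node-decoration factors `𝓘_{(𝔱,p)}[X^k]` with `p ≤ k` and `p ≠ k`;
an element is a pair `((𝔱,p), k)` subject to these constraints. -/
abbrev PolyDec (Lp : Type) (d : ℕ) :=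
  {x : Odx Lp d × MIdx d // x.1.2 ≤ x.2 ∧ x.1.2 ≠ x.2}

/-- Raise the polynomial exponent of a `PolyDec` by `e_i`. -/
def PolyDec.bump {Lp : Type} {d : ℕ} (pd : PolyDec Lp d) (i : Fin (d+1)) : PolyDec Lp d :=
  ⟨(pd.1.1, pd.1.2 + munit i), by
    constructor
    · exact fun j => le_trans (pd.2.1 j) (Nat.le_add_right _ _)
    · intro h
      have hi : pd.1.1.2 i ≤ pd.1.2 i := pd.2.1 i
      have h' : pd.1.1.2 i = pd.1.2 i + munit i i := congrFun h i
      simp only [munit, Pi.single_eq_same] at h'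
      omega⟩

/-- The fresh polynomial decoration `𝓘_{(𝔱,p)}[X^{p+e_i}]`. -/
def freshPD {Lp : Type} {d : ℕ} (o : Odx Lp d) (i : Fin (d+1)) : PolyDec Lp d :=
  ⟨(o, o.2 + munit i), by
    constructor
    · exact fun j => Nat.le_add_right _ _
    · intro h
      have h' : o.2 i = o.2 i + munit i i := congrFun h i
      simp only [munit, Pi.single_eq_same] at h'
      omega⟩

/-- Lower the polynomial exponent of a `PolyDec` by `e_i`. -/
def PolyDec.lower {Lp : Type} {d : ℕ} (pd : PolyDec Lp d) (i : Fin (d+1))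
    (h : pd.1.1.2 + munit i ≤ pd.1.2) (hne : ¬ pd.1.2 - munit i = pd.1.1.2) : PolyDec Lp d :=
  ⟨(pd.1.1, pd.1.2 - munit i), by
    constructor
    · intro j
      have hj := h j
      simp only [Pi.add_apply, Pi.sub_apply] at hj ⊢
      omega
    · exact fun hh => hne hh.symm⟩

/-- The set `𝔅` of decorated rooted trees with polynomial node decorations, presented
abstractly. -/
structure TreeB (Lp Dr : Type) (d : ℕ) where
  B : Type
  node : Dr → Multiset (PolyDec Lp d) → Multiset (Odx Lp d × B) → B
  node_bij : Function.Bijective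
    (fun x : Dr × Multiset (PolyDec Lp d) × Multiset (Odx Lp d × B) => node x.1 x.2.1 x.2.2)
  ind : ∀ P : B → Prop,
    (∀ l N (M : Multiset (Odx Lp d × B)), (∀ x ∈ M, P x.2) → P (node l N M)) → ∀ σ, P σ

namespace TreeB

variable {Lp Dr : Type} {d : ℕ} (S : TreeB Lp Dr d)

/-- Rebuild a tree after replacing the `j`-th branch by a linear combination of trees. -/
noncomputable def replace (l : Dr) (N : List (PolyDec Lp d)) (L : List (Odx Lp d × S.B))
    (j : Fin L.length) (w : S.B →₀ ℝ) : S.B →₀ ℝ :=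
  w.sum fun σ' c => Finsupp.single (S.node l ↑N (↑(L.set j ((L.get j).1, σ')))) c

/-- Defining recursion of `Υ̊^F`. -/
def UpsSpec [DecidableEq Lp] (F : Lp → Dr → FnO Lp d) (Ups : Lp → S.B → FnO Lp d) : Prop :=
  ∀ (t : Lp) (l : Dr) (N : List (PolyDec Lp d)) (L : List (Odx Lp d × S.B)),
    Ups t (S.node l ↑N ↑L) = fun x =>
      (∏ i : Fin N.length, x ((N.get i).1.1.1, (N.get i).1.2)) *
      (∏ j : Fin L.length, Ups (L.get j).1.1 (L.get j).2 x) *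
      Dlist (N.map (fun pd => pd.1.1) ++ L.map Prod.fst) (F t l) x

/-- Defining recursion of the grafting operators `⋖_o` on `𝔅`. -/
def GraftSpec (graft : Odx Lp d → S.B → S.B → (S.B →₀ ℝ)) : Prop :=
  ∀ (o : Odx Lp d) (σ' : S.B) (l : Dr) (N : List (PolyDec Lp d)) (L : List (Odx Lp d × S.B)),
    graft o σ' (S.node l ↑N ↑L) =
      Finsupp.single (S.node l ↑N ((o, σ') ::ₘ (↑L : Multiset _))) 1
      + (∑ j : Fin L.length, S.replace l N L j (graft o σ' (L.get j).2))
      + ∑ i : Fin N.length,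
          (if o = ((N.get i).1.1.1, (N.get i).1.2) then
            Finsupp.single
              (S.node l ↑(N.eraseIdx i) (((N.get i).1.1, σ') ::ₘ (↑L : Multiset _))) 1
          else 0)

/-- Defining recursion of the inner product on `𝔹`. -/
def IPSpec (ip : S.B → S.B → ℝ) : Prop :=
  ∀ (l l' : Dr) (N N' : List (PolyDec Lp d)) (L L' : List (Odx Lp d × S.B)),
    ip (S.node l ↑N ↑L) (S.node l' ↑N' ↑L') =
      (if l = l' then 1 else 0) *
      (∑ s : Fin N.length ≃ Fin N'.length,
        ∏ i : Fin N.length,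
          (if (N.get i).1 = (N'.get (s i)).1 then
            (mfact ((N.get i).1.2 - (N.get i).1.1.2) : ℝ)
          else 0)) *
      ∑ s : Fin L.length ≃ Fin L'.length,
        ∏ j : Fin L.length,
          (if (L.get j).1 = (L'.get (s j)).1 then ip (L.get j).2 (L'.get (s j)).2 else 0)

/-- Defining recursion of the raising operator `↑_i` on `𝔅`, producing a formal series
(represented by its coefficient function `𝔅 → ℝ`). -/
def RaiseSpec (raise : Fin (d+1) → S.B → (S.B → ℝ)) : Prop :=
  ∀ (i : Fin (d+1)) (l : Dr) (N : List (PolyDec Lp d)) (L : List (Odx Lp d × S.B)),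
    raise i (S.node l ↑N ↑L) = fun σ'' =>
      (∑ ib : Fin N.length,
        (if σ'' = S.node l ↑(N.set ib ((N.get ib).bump i)) ↑L then 1 else 0))
      + (if ∃ o : Odx Lp d, σ'' = S.node l (freshPD o i ::ₘ (↑N : Multiset _)) ↑L then 1 else 0)
      + ∑ j : Fin L.length,
          ∑ᶠ σ' : S.B,
            raise i (L.get j).2 σ' *
              (if σ'' = S.node l ↑N ↑(L.set j ((L.get j).1, σ')) then 1 else 0)

/-- Defining recursion of the lowering operator `↑*_i` on `𝔅`. -/
def LowSpec (low : Fin (d+1) → S.B → (S.B →₀ ℝ)) : Prop :=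
  ∀ (i : Fin (d+1)) (l : Dr) (N : List (PolyDec Lp d)) (L : List (Odx Lp d × S.B)),
    low i (S.node l ↑N ↑L) =
      (∑ ib : Fin N.length,
        (if h : (N.get ib).1.1.2 + munit i ≤ (N.get ib).1.2 then
          (((N.get ib).1.2 i - (N.get ib).1.1.2 i : ℕ) : ℝ) •
            (if he : (N.get ib).1.2 - munit i = (N.get ib).1.1.2 then
              Finsupp.single (S.node l ↑(N.eraseIdx ib) ↑L) 1
            else
              Finsupp.single (S.node l ↑(N.set ib ((N.get ib).lower i h he)) ↑L) 1)
        else 0))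
      + ∑ j : Fin L.length, S.replace l N L j (low i (L.get j).2)

/-- Defining recursion of the cutting operator `⋖*_o : 𝔹 → 𝔹 ⊗ 𝔹` (elements of
`𝔹 ⊗ 𝔹` represented as finitely supported functions on pairs of trees, a pair
`(branch, trunk)` recording a cut). -/
def CutSpec (cut : Odx Lp d → S.B → (S.B × S.B →₀ ℝ)) : Prop :=
  ∀ (t : Lp) (p : MIdx d) (l : Dr) (N : List (PolyDec Lp d)) (L : List (Odx Lp d × S.B)),
    cut (t, p) (S.node l ↑N ↑L) =
      (∑ j : Fin L.length,
        (if hc : (L.get j).1.1 = t ∧ (L.get j).1.2 ≤ p then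
          ((mfact (p - (L.get j).1.2) : ℝ))⁻¹ •
            Finsupp.single ((L.get j).2,
              S.node l
                (if he : (L.get j).1.2 = p then (↑N : Multiset (PolyDec Lp d))
                 else (⟨((L.get j).1, p), hc.2, he⟩ ::ₘ (↑N : Multiset (PolyDec Lp d))))
                ↑(L.eraseIdx j)) 1
        else 0))
      + ∑ j : Fin L.length,
          (cut (t, p) (L.get j).2).sum fun ab c =>
            Finsupp.single (ab.1, S.node l ↑N ↑(L.set j ((L.get j).1, ab.2))) c

end TreeB

/-- Defining recursion of the map `Q : 𝔹 → 𝕍` collapsing polynomial decorations. -/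
def QSpec {Lp Dr : Type} {d : ℕ} (SB : TreeB Lp Dr d) (SV : TreeV Lp Dr d)
    (Qf : SB.B → SV.V) : Prop :=
  ∀ (l : Dr) (N : Multiset (PolyDec Lp d)) (M : Multiset (Odx Lp d × SB.B)),
    Qf (SB.node l N M) =
      SV.node l ((N.map fun pd => pd.1.2 - pd.1.1.2).sum) (M.map fun x => (x.1, Qf x.2))

/-- The generic summand of the multivariate Faà di Bruno formula, indexed by `(r, q⃗, m⃗)`;
it vanishes unless `(q⃗, m⃗) ∈ I(r,k)`. -/
noncomputable def fdbSummand {Lp : Type} {d : ℕ} [DecidableEq Lp] (lo : LinearOrder (MIdx d))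
    (F : FnO Lp d) (k : MIdx d)
    (p : Σ r : ℕ, (Fin r → MIdx d) × (Fin r → (Odx Lp d →₀ ℕ))) : FnO Lp d :=
  if (∀ j, p.2.2 j ≠ 0) ∧ (∀ j j' : Fin p.1, j < j' → lo.lt (p.2.1 j) (p.2.1 j')) ∧
      (∀ j, lo.lt 0 (p.2.1 j)) ∧ (∑ j, ((p.2.2 j).sum fun _ n => n) • p.2.1 j) = k then
    fun x =>
      (∏ j, (p.2.2 j).prod fun o n =>
        (x (o.1, o.2 + p.2.1 j) / (mfact (p.2.1 j) : ℝ)) ^ n / (Nat.factorial n : ℝ)) *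
        Dexp (∑ j, p.2.2 j) F x
  else 0

/-! ### Generic decorated trees -/

/-- Decorated rooted trees over node species `N` and edge species `E`,
presented abstractly. -/
structure GTree (N E : Type) where
  T : Type
  node : N → Multiset (E × T) → T
  node_bij : Function.Bijective (fun x : N × Multiset (E × T) => node x.1 x.2)
  ind : ∀ P : T → Prop, (∀ Y M, (∀ x ∈ M, P x.2) → P (node Y M)) → ∀ τ, P τ

namespace GTree

/-- Multilinear expansion of a list of edge-decorated linear combinations of trees into a
linear combination of branch multisets. -/
noncomputable def expandAux {N E : Type} (S : GTree N E) :
    List (E × (S.T →₀ ℝ)) → (Multiset (E × S.T) →₀ ℝ)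
  | [] => Finsupp.single 0 1
  | (e, w) :: L =>
      w.sum fun τ' c => (S.expandAux L).sum fun M c' => Finsupp.single ((e, τ') ::ₘ M) (c * c')

/-- Defining recursion of the functorial extension `𝔗(A)` of a linear map `A` between
the free vector spaces on the node species. -/
def MapSpec {N N' E : Type} (S : GTree N E) (S' : GTree N' E)
    (A : N → (N' →₀ ℝ)) (TA : S.T → (S'.T →₀ ℝ)) : Prop :=
  ∀ (Y : N) (L : List (E × S.T)),
    TA (S.node Y ↑L) =
      (A Y).sum fun Y' c =>
        (S'.expandAux (L.map fun x => (x.1, TA x.2))).sum fun M c' =>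
          Finsupp.single (S'.node Y' M) (c * c')

/-- Defining recursion of the inner product on `𝔗(𝖭,𝖤)` induced by an inner product on
the node species. -/
def IPSpec {N E : Type} (S : GTree N E) (ipN : N → N → ℝ) (ip : S.T → S.T → ℝ) : Prop :=
  ∀ (Y Y' : N) (L L' : List (E × S.T)),
    ip (S.node Y ↑L) (S.node Y' ↑L') =
      ipN Y Y' * ∑ s : Fin L.length ≃ Fin L'.length,
        ∏ j : Fin L.length,
          (if (L.get j).1 = (L'.get (s j)).1 then ip (L.get j).2 (L'.get (s j)).2 else 0)

end GTree


namespace AdjointAux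

open GTree

variable {N N' E : Type}

/-- Reindex a sum over equivalences when the summand depends only on `j.val`. -/
lemma reindex_sum {n n' m : ℕ} (h : n = n') (F : ℕ → Fin m → ℝ) :
    (∑ s : Fin n ≃ Fin m, ∏ j : Fin n, F j.val (s j)) =
      ∑ s : Fin n' ≃ Fin m, ∏ j : Fin n', F j.val (s j) := by
  subst h; rfl

/-- Summing over an equivalence versus its inverse. -/
lemma sum_equiv_symm {n m : ℕ} (f : Fin n → Fin m → ℝ) :
    (∑ s : Fin n ≃ Fin m, ∏ j, f j (s j)) = ∑ t : Fin m ≃ Fin n, ∏ i, f (t i) i :=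
  (Fintype.sum_bijective Equiv.symm Equiv.symm_bijective _ _ (fun t => by
    rw [← Equiv.prod_comp t (fun j => f j (t.symm j))]
    exact Finset.prod_congr rfl fun i _ => by rw [Equiv.symm_apply_apply])).symm

/-- The inner-product factor associated to an optional generalized branch entry. -/
noncomputable def phiO (S' : GTree N' E) (ipT' : S'.T → S'.T → ℝ) (L'' : List (E × S'.T))
    (x : Option (E × (S'.T →₀ ℝ))) (m : Fin L''.length) : ℝ :=
  x.elim 0 fun p =>
    if p.1 = (L''.get m).1 then p.2.sum fun τ' c => c * ipT' τ' (L''.get m).2 else 0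

/-- The inner-product factor at position `k` of a list of generalized branch entries. -/
noncomputable def phiE (S' : GTree N' E) (ipT' : S'.T → S'.T → ℝ) (L'' : List (E × S'.T))
    (l : List (E × (S'.T →₀ ℝ))) (k : ℕ) (m : Fin L''.length) : ℝ :=
  phiO S' ipT' L'' (l[k]?) m

lemma phiO_single (S' : GTree N' E) (ipT' : S'.T → S'.T → ℝ) (L'' : List (E × S'.T))
    (e : E) (τ : S'.T) (m : Fin L''.length) :
    phiO S' ipT' L'' (some (e, Finsupp.single τ (1:ℝ))) m =
      if e = (L''.get m).1 then ipT' τ (L''.get m).2 else 0 := by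
  simp only [phiO, Option.elim]
  by_cases h : e = (L''.get m).1
  · rw [if_pos h, if_pos h,
      Finsupp.sum_single_index (h := fun τ' c => c * ipT' τ' (L''.get m).2) (zero_mul _),
      one_mul]
  · rw [if_neg h, if_neg h]

lemma phiO_expand (S' : GTree N' E) (ipT' : S'.T → S'.T → ℝ) (L'' : List (E × S'.T))
    (e : E) (w : S'.T →₀ ℝ) (m : Fin L''.length) :
    phiO S' ipT' L'' (some (e, w)) m =
      w.sum fun τ' c => c * phiO S' ipT' L'' (some (e, Finsupp.single τ' (1:ℝ))) m := by
  rw [show phiO S' ipT' L'' (some (e, w)) m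
      = if e = (L''.get m).1 then w.sum fun τ' c => c * ipT' τ' (L''.get m).2 else 0 from rfl]
  simp only [phiO_single]
  by_cases h : e = (L''.get m).1
  · simp only [if_pos h]
  · simp only [if_neg h, mul_zero]
    exact Finset.sum_const_zero.symm

lemma get?_append_ne {α : Type*} (X : List α) (a b : α) (Y : List α) (k : ℕ)
    (hk : k ≠ X.length) :
    (X ++ a :: Y)[k]? = (X ++ b :: Y)[k]? := by
  rcases Nat.lt_or_ge k X.length with h | h
  · rw [List.getElem?_append_left h, List.getElem?_append_left h]
  · obtain ⟨mm, rfl⟩ : ∃ mm, k = X.length + (mm + 1) :=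
      ⟨k - X.length - 1, by omega⟩
    rw [List.getElem?_append_right (by omega), List.getElem?_append_right (by omega)]
    have h2 : X.length + (mm + 1) - X.length = mm + 1 := by omega
    rw [h2]
    rfl

lemma get?_append_len {α : Type*} (X : List α) (a : α) (Y : List α) :
    (X ++ a :: Y)[X.length]? = some a := by
  rw [List.getElem?_append_right (le_refl _)]
  simp

/-- Multilinearity of the equivalence-sum in the entry at position `X.length`. -/
lemma lin_step (S' : GTree N' E) (ipT' : S'.T → S'.T → ℝ) (L'' : List (E × S'.T))
    (X Y' : List (E × (S'.T →₀ ℝ))) (e : E) (w : S'.T →₀ ℝ) {n : ℕ}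
    (hn : n = X.length + (Y'.length + 1)) :
    (∑ s : Fin n ≃ Fin L''.length, ∏ j : Fin n,
        phiE S' ipT' L'' (X ++ (e, w) :: Y') j.val (s j))
    = w.sum fun τ' c => c * ∑ s : Fin n ≃ Fin L''.length, ∏ j : Fin n,
        phiE S' ipT' L'' (X ++ (e, Finsupp.single τ' (1:ℝ)) :: Y') j.val (s j) := by
  have hj₀ : X.length < n := by omega
  set j₀ : Fin n := ⟨X.length, hj₀⟩ with hj₀def
  have key : ∀ s : Fin n ≃ Fin L''.length,
      (∏ j : Fin n, phiE S' ipT' L'' (X ++ (e, w) :: Y') j.val (s j))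
      = w.sum fun τ' c => c * ∏ j : Fin n,
          phiE S' ipT' L'' (X ++ (e, Finsupp.single τ' (1:ℝ)) :: Y') j.val (s j) := by
    intro s
    have hrest : ∀ τ' : S'.T,
        (∏ j ∈ Finset.univ.erase j₀,
          phiE S' ipT' L'' (X ++ (e, Finsupp.single τ' (1:ℝ)) :: Y') j.val (s j))
        = ∏ j ∈ Finset.univ.erase j₀,
          phiE S' ipT' L'' (X ++ (e, w) :: Y') j.val (s j) := by
      intro τ'
      refine Finset.prod_congr rfl fun j hj => ?_
      have hne : (j : ℕ) ≠ X.length := fun hc =>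
        (Finset.mem_erase.mp hj).1 (Fin.ext hc)
      unfold phiE
      rw [get?_append_ne _ _ _ _ _ hne]
    calc (∏ j : Fin n, phiE S' ipT' L'' (X ++ (e, w) :: Y') j.val (s j))
        = phiE S' ipT' L'' (X ++ (e, w) :: Y') j₀.val (s j₀) *
            ∏ j ∈ Finset.univ.erase j₀,
              phiE S' ipT' L'' (X ++ (e, w) :: Y') j.val (s j) :=
          (Finset.mul_prod_erase _ _ (Finset.mem_univ j₀)).symm
      _ = (w.sum fun τ' c => c * phiO S' ipT' L'' (some (e, Finsupp.single τ' (1:ℝ))) (s j₀)) *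
            ∏ j ∈ Finset.univ.erase j₀,
              phiE S' ipT' L'' (X ++ (e, w) :: Y') j.val (s j) := by
          unfold phiE
          rw [show ((X ++ (e, w) :: Y')[(j₀ : ℕ)]?) = some (e, w) from get?_append_len X _ Y']
          rw [phiO_expand]
      _ = w.sum fun τ' c => c * (phiO S' ipT' L'' (some (e, Finsupp.single τ' (1:ℝ))) (s j₀) *
            ∏ j ∈ Finset.univ.erase j₀,
              phiE S' ipT' L'' (X ++ (e, w) :: Y') j.val (s j)) := by
          rw [Finsupp.sum_mul]
          exact Finsupp.sum_congr fun τ' _ => mul_assoc _ _ _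
      _ = w.sum fun τ' c => c * ∏ j : Fin n,
            phiE S' ipT' L'' (X ++ (e, Finsupp.single τ' (1:ℝ)) :: Y') j.val (s j) := by
          refine Finsupp.sum_congr fun τ' _ => ?_
          congr 1
          rw [← hrest τ',
            show phiO S' ipT' L'' (some (e, Finsupp.single τ' (1:ℝ))) (s j₀)
              = phiE S' ipT' L'' (X ++ (e, Finsupp.single τ' (1:ℝ)) :: Y') j₀.val (s j₀) by
                unfold phiE; rw [get?_append_len X _ Y']]
          exact Finset.mul_prod_erase Finset.univ
            (fun j => phiE S' ipT' L'' (X ++ (e, Finsupp.single τ' (1:ℝ)) :: Y') j.val (s j))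
            (Finset.mem_univ j₀)
  calc (∑ s : Fin n ≃ Fin L''.length, ∏ j : Fin n,
        phiE S' ipT' L'' (X ++ (e, w) :: Y') j.val (s j))
      = ∑ s : Fin n ≃ Fin L''.length, ∑ τ' ∈ w.support, w τ' * (1:ℝ) *
          ∏ j : Fin n,
            phiE S' ipT' L'' (X ++ (e, Finsupp.single τ' (1:ℝ)) :: Y') j.val (s j) := by
        refine Finset.sum_congr rfl fun s _ => ?_
        rw [key s, Finsupp.sum]
        exact Finset.sum_congr rfl fun τ' _ => by ring
    _ = ∑ τ' ∈ w.support, ∑ s : Fin n ≃ Fin L''.length, w τ' * (1:ℝ) *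
          ∏ j : Fin n,
            phiE S' ipT' L'' (X ++ (e, Finsupp.single τ' (1:ℝ)) :: Y') j.val (s j) :=
        Finset.sum_comm
    _ = w.sum fun τ' c => c * ∑ s : Fin n ≃ Fin L''.length, ∏ j : Fin n,
          phiE S' ipT' L'' (X ++ (e, Finsupp.single τ' (1:ℝ)) :: Y') j.val (s j) := by
        rw [Finsupp.sum]
        refine Finset.sum_congr rfl fun τ' _ => ?_
        rw [Finset.mul_sum]
        exact Finset.sum_congr rfl fun s _ => by ring

lemma expandAux_cons_sum (S' : GTree N' E) (e : E) (w : S'.T →₀ ℝ)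
    (W : List (E × (S'.T →₀ ℝ))) (G : Multiset (E × S'.T) → ℝ) :
    ((S'.expandAux ((e, w) :: W)).sum fun M c => c * G M)
    = w.sum fun τ' c => c * ((S'.expandAux W).sum fun M c' => c' * G ((e, τ') ::ₘ M)) := by
  rw [show S'.expandAux ((e, w) :: W)
      = w.sum fun τ' c => (S'.expandAux W).sum fun M c' =>
          Finsupp.single ((e, τ') ::ₘ M) (c * c') from by rw [GTree.expandAux]]
  rw [Finsupp.sum_sum_index (h := fun M c => c * G M)
    (fun _ => zero_mul _) (fun _ _ _ => add_mul _ _ _)]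
  refine Finsupp.sum_congr fun τ' _ => ?_
  rw [Finsupp.sum_sum_index (h := fun M c => c * G M)
    (fun _ => zero_mul _) (fun _ _ _ => add_mul _ _ _),
    Finsupp.mul_sum]
  refine Finsupp.sum_congr fun M _ => ?_
  rw [Finsupp.sum_single_index (h := fun M c => c * G M) (zero_mul _), mul_assoc]

lemma coe_add_cons {α : Type*} (P : List α) (x : α) (M : Multiset α) :
    (↑P : Multiset α) + (x ::ₘ M) = ↑(P ++ [x]) + M := by
  have h : (↑(P ++ [x]) : Multiset α) = ↑P + {x} := by
    rw [← Multiset.coe_add, Multiset.coe_singleton]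
  rw [h, add_assoc, Multiset.singleton_add]

/-- Core expansion lemma: summing the inner product against the multilinear expansion. -/
lemma core (S' : GTree N' E) (ipN' : N' → N' → ℝ) (ipT' : S'.T → S'.T → ℝ)
    (hip : S'.IPSpec ipN' ipT') (Z Y'' : N') (L'' : List (E × S'.T)) :
    ∀ (W : List (E × (S'.T →₀ ℝ))) (P : List (E × S'.T)),
      ((S'.expandAux W).sum fun M c =>
          c * ipT' (S'.node Z ((↑P : Multiset (E × S'.T)) + M)) (S'.node Y'' ↑L''))
      = ipN' Z Y'' * ∑ s : Fin (P.length + W.length) ≃ Fin L''.length,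
          ∏ j : Fin (P.length + W.length),
            phiE S' ipT' L''
              ((P.map fun x => (x.1, Finsupp.single x.2 (1:ℝ))) ++ W) j.val (s j) := by
  intro W
  induction W with
  | nil =>
    intro P
    rw [show S'.expandAux [] = Finsupp.single 0 1 from by rw [GTree.expandAux]]
    rw [Finsupp.sum_single_index
      (h := fun M c => c * ipT' (S'.node Z ((↑P : Multiset (E × S'.T)) + M)) (S'.node Y'' ↑L''))
      (zero_mul _), one_mul, add_zero, hip]
    congr 1
    refine Finset.sum_congr rfl fun s _ => Finset.prod_congr rfl fun j _ => ?_
    unfold phiE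
    rw [List.append_nil, List.getElem?_map, List.getElem?_eq_getElem j.isLt]
    simp only [Option.map_some]
    rw [phiO_single]
    rfl
  | cons hd W ih =>
    obtain ⟨e, w⟩ := hd
    intro P
    rw [expandAux_cons_sum]
    rw [lin_step S' ipT' L'' (P.map fun x => (x.1, Finsupp.single x.2 (1:ℝ))) W e w
      (by simp), Finsupp.mul_sum]
    refine Finsupp.sum_congr fun τ' _ => ?_
    have hMrw : ((S'.expandAux W).sum fun M c' =>
        c' * ipT' (S'.node Z ((↑P : Multiset (E × S'.T)) + ((e, τ') ::ₘ M)))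
          (S'.node Y'' ↑L''))
        = (S'.expandAux W).sum fun M c' =>
            c' * ipT' (S'.node Z ((↑(P ++ [(e, τ')]) : Multiset (E × S'.T)) + M))
              (S'.node Y'' ↑L'') :=
      Finsupp.sum_congr fun M _ => by rw [coe_add_cons]
    rw [hMrw, ih (P ++ [(e, τ')])]
    have hlen : (P ++ [(e, τ')]).length + W.length = P.length + ((e, w) :: W).length := by
      simp; omega
    have hlist : ((P ++ [(e, τ')]).map fun x => (x.1, Finsupp.single x.2 (1:ℝ))) ++ W
        = (P.map fun x => (x.1, Finsupp.single x.2 (1:ℝ)))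
            ++ (e, Finsupp.single τ' (1:ℝ)) :: W := by
      simp
    rw [hlist, reindex_sum hlen (phiE S' ipT' L''
      ((P.map fun x => (x.1, Finsupp.single x.2 (1:ℝ)))
        ++ (e, Finsupp.single τ' (1:ℝ)) :: W))]
    ring

/-- Master expansion lemma. -/
lemma master (S : GTree N E) (S' : GTree N' E) (ipN' : N' → N' → ℝ)
    (ipT' : S'.T → S'.T → ℝ) (hip : S'.IPSpec ipN' ipT')
    (A : N → (N' →₀ ℝ)) (TA : S.T → (S'.T →₀ ℝ)) (hTA : GTree.MapSpec S S' A TA)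
    (Y : N) (L : List (E × S.T)) (Y'' : N') (L'' : List (E × S'.T)) :
    ((TA (S.node Y ↑L)).sum fun τ' c => c * ipT' τ' (S'.node Y'' ↑L''))
    = ((A Y).sum fun Z c => c * ipN' Z Y'') *
        ∑ s : Fin L.length ≃ Fin L''.length, ∏ j : Fin L.length,
          (if (L.get j).1 = (L''.get (s j)).1 then
            ((TA (L.get j).2).sum fun τ' c => c * ipT' τ' (L''.get (s j)).2) else 0) := by
  rw [hTA, Finsupp.sum_sum_index (h := fun τ' c => c * ipT' τ' (S'.node Y'' ↑L''))
    (fun _ => zero_mul _) (fun _ _ _ => add_mul _ _ _),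
    Finsupp.sum_mul]
  refine Finsupp.sum_congr fun Z _ => ?_
  rw [Finsupp.sum_sum_index (h := fun τ' c => c * ipT' τ' (S'.node Y'' ↑L''))
    (fun _ => zero_mul _) (fun _ _ _ => add_mul _ _ _)]
  have h1 : ((S'.expandAux (L.map fun x => (x.1, TA x.2))).sum fun M c' =>
      (Finsupp.single (S'.node Z M) ((A Y) Z * c')).sum fun τ' c =>
        c * ipT' τ' (S'.node Y'' ↑L''))
      = (A Y) Z * ((S'.expandAux (L.map fun x => (x.1, TA x.2))).sum fun M c' =>
          c' * ipT' (S'.node Z ((↑([] : List (E × S'.T)) : Multiset (E × S'.T)) + M))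
            (S'.node Y'' ↑L'')) := by
    rw [Finsupp.mul_sum]
    refine Finsupp.sum_congr fun M _ => ?_
    rw [Finsupp.sum_single_index (h := fun τ' c => c * ipT' τ' (S'.node Y'' ↑L'')) (zero_mul _)]
    have : (↑([] : List (E × S'.T)) : Multiset (E × S'.T)) + M = M := by simp
    rw [this, mul_assoc]
  rw [h1, core S' ipN' ipT' hip Z Y'' L'' (L.map fun x => (x.1, TA x.2)) []]
  have hlen : ([] : List (E × S'.T)).length + (L.map fun x => (x.1, TA x.2)).length
      = L.length := by simp
  rw [reindex_sum hlen (phiE S' ipT' L''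
    ((([] : List (E × S'.T)).map fun x => (x.1, Finsupp.single x.2 (1:ℝ)))
      ++ L.map fun x => (x.1, TA x.2)))]
  have hprod : ∀ s : Fin L.length ≃ Fin L''.length, ∀ j : Fin L.length,
      phiE S' ipT' L''
        ((([] : List (E × S'.T)).map fun x => (x.1, Finsupp.single x.2 (1:ℝ)))
          ++ L.map fun x => (x.1, TA x.2)) j.val (s j)
      = (if (L.get j).1 = (L''.get (s j)).1 then
          ((TA (L.get j).2).sum fun τ' c => c * ipT' τ' (L''.get (s j)).2) else 0) := by
    intro s j
    unfold phiE
    rw [show (([] : List (E × S'.T)).map fun x => (x.1, Finsupp.single x.2 (1:ℝ)))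
        ++ L.map (fun x => (x.1, TA x.2)) = L.map fun x => (x.1, TA x.2) from rfl]
    rw [List.getElem?_map, List.getElem?_eq_getElem j.isLt]
    rfl
  rw [Finset.sum_congr rfl fun s _ => Finset.prod_congr rfl fun j _ => hprod s j]
  ring

/-- The flipped inner product satisfies the flipped specification. -/
lemma ipspec_flip (S : GTree N E) (ipN : N → N → ℝ) (ip : S.T → S.T → ℝ)
    (h : S.IPSpec ipN ip) :
    S.IPSpec (fun a b => ipN b a) (fun a b => ip b a) := by
  intro Y Y' L L'
  show ip (S.node Y' ↑L') (S.node Y ↑L) = _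
  rw [h]
  rw [sum_equiv_symm (fun (j : Fin L.length) (m : Fin L'.length) =>
    if (L.get j).1 = (L'.get m).1 then ip (L'.get m).2 (L.get j).2 else 0)]
  congr 1
  refine Finset.sum_congr rfl fun t _ => Finset.prod_congr rfl fun i _ => ?_
  exact if_congr ⟨Eq.symm, Eq.symm⟩ rfl rfl

end AdjointAux

/-- Lemma `lem: adjoint identity`: functoriality of the decorated-tree
inner product construction with respect to adjoints: if `A* ` is the adjoint of `A` on
node species, then `𝔗(A*)` is the adjoint of `𝔗(A)`: `⟨𝔗(A)τ, σ⟩ = ⟨τ, 𝔗(A*)σ⟩`. -/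
theorem statement13
    {N N' E : Type}
    (S : GTree N E) (S' : GTree N' E)
    (ipN : N → N → ℝ) (ipN' : N' → N' → ℝ)
    (ipT : S.T → S.T → ℝ) (hipT : S.IPSpec ipN ipT)
    (ipT' : S'.T → S'.T → ℝ) (hipT' : S'.IPSpec ipN' ipT')
    (A : N → (N' →₀ ℝ)) (Astar : N' → (N →₀ ℝ))
    (hadj : ∀ (Y : N) (Y' : N'),
      ((A Y).sum fun Z c => c * ipN' Z Y') = (Astar Y').sum fun Z c => c * ipN Y Z)
    (TA : S.T → (S'.T →₀ ℝ)) (hTA : GTree.MapSpec S S' A TA)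
    (TAstar : S'.T → (S.T →₀ ℝ)) (hTAstar : GTree.MapSpec S' S Astar TAstar) :
    ∀ (τ : S.T) (σ : S'.T),
      ((TA τ).sum fun τ' c => c * ipT' τ' σ) =
        (TAstar σ).sum fun σ' c => c * ipT τ σ' := by
  intro τ
  refine S.ind (fun τ => ∀ σ : S'.T,
    ((TA τ).sum fun τ' c => c * ipT' τ' σ) =
      (TAstar σ).sum fun σ' c => c * ipT τ σ') ?_ τ
  intro Y M hM σ
  obtain ⟨Lt, rfl⟩ : ∃ l : List (E × S.T), M = ↑l := ⟨M.toList, (Multiset.coe_toList M).symm⟩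
  obtain ⟨⟨Y'', M''⟩, rfl⟩ := S'.node_bij.2 σ
  obtain ⟨L'', rfl⟩ : ∃ l : List (E × S'.T), M'' = ↑l :=
    ⟨M''.toList, (Multiset.coe_toList M'').symm⟩
  rw [AdjointAux.master S S' ipN' ipT' hipT' A TA hTA Y Lt Y'' L'',
    AdjointAux.master S' S (fun a b => ipN b a) (fun a b => ipT b a)
      (AdjointAux.ipspec_flip S ipN ipT hipT) Astar TAstar hTAstar Y'' L'' Y Lt,
    hadj Y Y'']
  congr 1
  have hIH : ∀ (j : Fin Lt.length) (m : Fin L''.length),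
      ((TA (Lt.get j).2).sum fun τ' c => c * ipT' τ' (L''.get m).2)
      = (TAstar (L''.get m).2).sum fun σ' c => c * ipT (Lt.get j).2 σ' :=
    fun j m => hM (Lt.get j) (Multiset.mem_coe.mpr (List.get_mem Lt j)) (L''.get m).2
  rw [Finset.sum_congr rfl fun s _ => Finset.prod_congr rfl fun j _ =>
    (by rw [hIH j (s j)] :
      (if (Lt.get j).1 = (L''.get (s j)).1 then
        ((TA (Lt.get j).2).sum fun τ' c => c * ipT' τ' (L''.get (s j)).2) else 0)
      = (if (Lt.get j).1 = (L''.get (s j)).1 then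
        ((TAstar (L''.get (s j)).2).sum fun σ' c => c * ipT (Lt.get j).2 σ') else 0))]
  rw [AdjointAux.sum_equiv_symm (fun (j : Fin Lt.length) (m : Fin L''.length) =>
    if (Lt.get j).1 = (L''.get m).1 then
      ((TAstar (L''.get m).2).sum fun σ' c => c * ipT (Lt.get j).2 σ') else 0)]
  refine Finset.sum_congr rfl fun t _ => Finset.prod_congr rfl fun i _ => ?_
  exact if_congr ⟨Eq.symm, Eq.symm⟩ rfl rfl


end SPDERenorm
end

section
/- Multi-pre-Lie identity for the grafting operators on decorated trees (identity 'pre_lie_identity'): For all (𝔱₁,p₁), (𝔱₂,p₂) ∈ 𝒪 and all τ₁, τ₂, τ₃ ∈ 𝒱 one has, in 𝕍, (τ₁ ⋖̂_{(𝔱₁,p₁)} τ₂) ⋖̂_{(𝔱₂,p₂)} τ₃ − τ₁ ⋖̂_{(𝔱₁,p₁)} (τ₂ ⋖̂_{(𝔱₂,p₂)} τ₃) = (τ₂ ⋖̂_{(𝔱₂,p₂)} τ₁) ⋖̂_{(𝔱₁,p₁)} τ₃ − τ₂ ⋖̂_{(𝔱₂,p₂)} (τ₁ ⋖̂_{(𝔱₁,p₁)}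 τ₃). -/
/-
Common framework: multi-indices, the algebra of smooth functions on ℝ^𝒪,
and the spaces of decorated trees 𝒱 and 𝔅 of [Bruned–Chandra–Chevyrev–Hairer,
"Renormalising SPDEs in regularity structures"], presented abstractly together
with the defining recursions of the various operators on them.
-/

open scoped BigOperators Classical

namespace SPDERenorm

namespace Aux


noncomputable def TT {α : Type*} {M : Type*} [AddCommGroup M] [Module ℝ M]
    (w : α →₀ ℝ) (f : α → M) : M := w.sum fun a c => c • f a

variable {α β : Type*} {M : Type*} [AddCommGroup M] [Module ℝ M]

@[simp] lemma TT_single (a : α) (c : ℝ) (f : α → M) : TT (Finsupp.single a c) f = c • f a := by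
  rw [TT]; exact Finsupp.sum_single_index (by simp)

@[simp] lemma TT_zero_w (f : α → M) : TT (0 : α →₀ ℝ) f = 0 := by simp [TT]

lemma TT_add_w (w w' : α →₀ ℝ) (f : α → M) : TT (w + w') f = TT w f + TT w' f := by
  rw [TT, TT, TT]; exact Finsupp.sum_add_index' (by simp) (by intros; rw [add_smul])

noncomputable def TTh (f : α → M) : (α →₀ ℝ) →+ M :=
  AddMonoidHom.mk' (fun w => TT w f) (fun w w' => TT_add_w w w' f)

lemma TT_sub_w (w w' : α →₀ ℝ) (f : α → M) : TT (w - w') f = TT w f - TT w' f :=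
  map_sub (TTh f) w w'

lemma TT_sum_w {γ : Type*} (s : Finset γ) (w : γ → (α →₀ ℝ)) (f : α → M) :
    TT (∑ j ∈ s, w j) f = ∑ j ∈ s, TT (w j) f := map_sum (TTh f) w s

lemma TT_smul_w (c : ℝ) (w : α →₀ ℝ) (f : α → M) : TT (c • w) f = c • TT w f := by
  rw [TT, Finsupp.sum_smul_index' (by simp), TT, Finsupp.smul_sum]
  exact Finsupp.sum_congr fun a _ => mul_smul c _ _

lemma TT_add_f (w : α →₀ ℝ) (f g : α → M) :
    TT w (fun a => f a + g a) = TT w f + TT w g := by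
  simp [TT, smul_add, Finsupp.sum_add]

lemma TT_sum_f {γ : Type*} (w : α →₀ ℝ) (s : Finset γ) (F : γ → α → M) :
    TT w (fun a => ∑ j ∈ s, F j a) = ∑ j ∈ s, TT w (F j) := by
  rw [TT, Finsupp.sum]
  simp only [Finset.smul_sum]
  rw [Finset.sum_comm]
  rfl

lemma TT_smul_f (w : α →₀ ℝ) (c : ℝ) (f : α → M) :
    TT w (fun a => c • f a) = c • TT w f := by
  rw [TT, TT, Finsupp.smul_sum]
  exact Finsupp.sum_congr fun a _ => smul_comm _ _ _

lemma TT_comp (w : α →₀ ℝ) (g : α → (β →₀ ℝ)) (f : β → M) :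
    TT (TT w g) f = TT w (fun a => TT (g a) f) := by
  show TTh f (w.sum fun a c => c • g a) = _
  rw [map_finsuppSum (TTh f), TT]
  exact Finsupp.sum_congr fun a _ => TT_smul_w _ _ _

lemma TT_comm (w : α →₀ ℝ) (v : β →₀ ℝ) (h : α → β → M) :
    TT w (fun a => TT v (fun b => h a b)) = TT v (fun b => TT w (fun a => h a b)) := by
  simp only [TT, Finsupp.sum, Finset.smul_sum]
  rw [Finset.sum_comm]
  exact Finset.sum_congr rfl fun b _ => Finset.sum_congr rfl fun a _ => smul_comm _ _ _

/-- The finset of multi-indices `≤ m`. -/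
noncomputable def pf {d : ℕ} (m : MIdx d) : Finset (MIdx d) :=
  Fintype.piFinset fun i => Finset.range (m i + 1)

lemma mem_pf {d : ℕ} {m ℓ : MIdx d} : ℓ ∈ pf m ↔ ℓ ≤ m := by
  simp [pf, Fintype.mem_piFinset, Nat.lt_succ_iff, Pi.le_def]

lemma pf_mono {d : ℕ} {m m' : MIdx d} (h : m ≤ m') : pf m ⊆ pf m' := fun ℓ hℓ =>
  mem_pf.mpr (le_trans (mem_pf.mp hℓ) h)

lemma msum_pf {d : ℕ} {A : Type*} [AddCommMonoid A] (m : MIdx d) (f : MIdx d → A) :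
    msum m f = ∑ ℓ ∈ pf m, f ℓ := by
  rw [msum]
  refine Finset.sum_bij' (fun e _ => fun i => (e i : ℕ))
    (fun l hl => fun i => ⟨l i, ?_⟩) ?_ ?_ ?_ ?_ ?_
  · have := Fintype.mem_piFinset.mp hl i; simpa using this
  all_goals intros; try simp_all [pf, Fintype.mem_piFinset]
  all_goals exact fun i => Nat.lt_succ_iff.mp (‹(i : Fin (d+1)) → Fin (m i + 1)› i).isLt

lemma nat_choose_aux (n a b : ℕ) : n.choose a * (n-a).choose b = n.choose b * (n-b).choose a := by
  rcases le_or_gt (a+b) n with h | h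
  · have key : ∀ x y, x + y ≤ n →
        n.choose x * (n-x).choose y * (x.factorial * (y.factorial * (n - x - y).factorial))
          = n.factorial := by
      intro x y hxy
      have hx : x ≤ n := by omega
      have hy : y ≤ n - x := by omega
      have h1 := Nat.choose_mul_factorial_mul_factorial hx
      have h2 := Nat.choose_mul_factorial_mul_factorial hy
      calc n.choose x * (n-x).choose y * (x.factorial * (y.factorial * (n - x - y).factorial))
          = n.choose x * x.factorial * ((n-x).choose y * y.factorial * (n - x - y).factorial) := by
            ring
        _ = n.choose x * x.factorial * (n-x).factorial := by rw [h2]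
        _ = n.factorial := h1
    have hK : 0 < a.factorial * (b.factorial * (n - a - b).factorial) := by positivity
    apply Nat.eq_of_mul_eq_mul_right hK
    have hswap : n - a - b = n - b - a := by omega
    calc n.choose a * (n-a).choose b * (a.factorial * (b.factorial * (n - a - b).factorial))
        = n.factorial := key a b h
      _ = n.choose b * (n-b).choose a * (b.factorial * (a.factorial * (n - b - a).factorial)) :=
          (key b a (by omega)).symm
      _ = n.choose b * (n-b).choose a * (a.factorial * (b.factorial * (n - a - b).factorial)) := by
          rw [hswap]; ring
  · rcases le_or_gt a n with ha | ha
    · have h1 : (n-a).choose b = 0 := Nat.choose_eq_zero_of_lt (by omega)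
      rcases le_or_gt b n with hb | hb
      · simp [h1, Nat.choose_eq_zero_of_lt (show n - b < a by omega)]
      · simp [h1, Nat.choose_eq_zero_of_lt hb]
    · have h1 : n.choose a = 0 := Nat.choose_eq_zero_of_lt ha
      rcases le_or_gt b n with hb | hb
      · simp [h1, Nat.choose_eq_zero_of_lt (show n - b < a by omega)]
      · simp [h1, Nat.choose_eq_zero_of_lt hb]

lemma mchoose_comm {d : ℕ} (k ℓ ℓ' : MIdx d) :
    mchoose k ℓ * mchoose (k-ℓ) ℓ' = mchoose k ℓ' * mchoose (k-ℓ') ℓ := by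
  rw [mchoose, mchoose, mchoose, mchoose, ← Finset.prod_mul_distrib, ← Finset.prod_mul_distrib]
  exact Finset.prod_congr rfl fun i _ => nat_choose_aux (k i) (ℓ i) (ℓ' i)

lemma mchoose_zero_of_not_le {d : ℕ} {m ℓ : MIdx d} (h : ¬ ℓ ≤ m) : mchoose m ℓ = 0 := by
  rw [Pi.le_def, not_forall] at h
  obtain ⟨i, hi⟩ := h
  exact Finset.prod_eq_zero (Finset.mem_univ i) (Nat.choose_eq_zero_of_lt (by omega))


lemma sum_fin_cast {M : Type*} [AddCommMonoid M] {m n : ℕ} (h : m = n) (f : Fin m → M) :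
    ∑ i, f i = ∑ i : Fin n, f (Fin.cast h.symm i) :=
  (Fintype.sum_equiv (finCongr h.symm) _ _ (fun _ => rfl)).symm

section Graft

variable {d : ℕ} {Lp Dr : Type} [DecidableEq Lp] (S : TreeV Lp Dr d)
  (graft : Odx Lp d → S.V → S.V → (S.V →₀ ℝ))

/-- Replace the `j`-th branch, as a map into `𝕍`. -/
noncomputable def repF (l : Dr) (k : MIdx d) (L : List (Odx Lp d × S.V)) (j : Fin L.length) :
    S.V → (S.V →₀ ℝ) :=
  fun τ' => Finsupp.single (S.node l k ↑(L.set j ((L.get j).1, τ'))) 1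

lemma replace_eq (l : Dr) (k : MIdx d) (L : List (Odx Lp d × S.V)) (j : Fin L.length)
    (w : S.V →₀ ℝ) : S.replace l k L j w = TT w (repF S l k L j) := by
  rw [TreeV.replace, TT]
  exact Finsupp.sum_congr fun τ' _ => by rw [repF, Finsupp.smul_single', mul_one]

/-- The pre-Lie defect. -/
noncomputable def Phi (o1 o2 : Odx Lp d) (τ1 τ2 τ3 : S.V) : S.V →₀ ℝ :=
  TT (graft o1 τ1 τ2) (fun σ => graft o2 σ τ3) - TT (graft o2 τ2 τ3) (graft o1 τ1)

variable (hgraft : S.GraftSpec graft)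

include hgraft in
lemma expandA (w : S.V →₀ ℝ) (t2 : Lp) (p2 : MIdx d) (l : Dr) (k : MIdx d)
    (L : List (Odx Lp d × S.V)) :
    TT w (fun σ => graft (t2,p2) σ (S.node l k ↑L)) =
    (∑ ℓ ∈ pf (k ⊓ p2), (mchoose k ℓ : ℝ) •
       TT w (fun σ => Finsupp.single (S.node l (k - ℓ) (((t2, p2 - ℓ), σ) ::ₘ ↑L)) 1))
    + ∑ j : Fin L.length, TT (TT w (fun σ => graft (t2,p2) σ (L.get j).2)) (repF S l k L j) := by
  have h1 : (fun σ => graft (t2,p2) σ (S.node l k ↑L)) = fun σ =>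
      (∑ ℓ ∈ pf (k ⊓ p2), (mchoose k ℓ : ℝ) •
        Finsupp.single (S.node l (k-ℓ) (((t2,p2-ℓ),σ) ::ₘ ↑L)) 1)
      + ∑ j : Fin L.length, TT (graft (t2,p2) σ (L.get j).2) (repF S l k L j) := by
    funext σ
    rw [hgraft t2 p2 σ l k L, msum_pf]
    congr 1
    exact Finset.sum_congr rfl fun j _ => replace_eq S l k L j _
  rw [h1, TT_add_f, TT_sum_f, TT_sum_f]
  congr 1
  · exact Finset.sum_congr rfl fun ℓ _ => TT_smul_f _ _ _
  · exact Finset.sum_congr rfl fun j _ => (TT_comp _ _ _).symm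

include hgraft in
lemma expandB1 (t1 t2 : Lp) (p1 p2 : MIdx d) (τ1 τ2 : S.V) (l : Dr) (k : MIdx d)
    (L : List (Odx Lp d × S.V)) :
    TT (graft (t2,p2) τ2 (S.node l k ↑L)) (graft (t1,p1) τ1) =
    (∑ ℓ ∈ pf (k ⊓ p2), (mchoose k ℓ : ℝ) •
       graft (t1,p1) τ1 (S.node l (k-ℓ) (((t2,p2-ℓ),τ2) ::ₘ ↑L)))
    + ∑ j : Fin L.length, TT (graft (t2,p2) τ2 (L.get j).2)
        (fun σ' => graft (t1,p1) τ1 (S.node l k ↑(L.set j ((L.get j).1, σ')))) := by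
  rw [hgraft t2 p2 τ2 l k L, msum_pf, TT_add_w, TT_sum_w, TT_sum_w]
  congr 1
  · refine Finset.sum_congr rfl fun ℓ _ => ?_
    rw [TT_smul_w, TT_single, one_smul]
  · refine Finset.sum_congr rfl fun j _ => ?_
    rw [replace_eq, TT_comp]
    congr 1
    funext σ'
    rw [repF, TT_single, one_smul]

include hgraft in
lemma expandCons (t1 : Lp) (p1 : MIdx d) (τ1 : S.V) (l : Dr) (k' : MIdx d)
    (o : Odx Lp d) (τx : S.V) (L : List (Odx Lp d × S.V)) :
    graft (t1,p1) τ1 (S.node l k' ((o,τx) ::ₘ ↑L)) =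
    (∑ ℓ' ∈ pf (k' ⊓ p1), (mchoose k' ℓ' : ℝ) •
       Finsupp.single (S.node l (k'-ℓ') (((t1,p1-ℓ'),τ1) ::ₘ (o,τx) ::ₘ ↑L)) 1)
    + TT (graft (t1,p1) τ1 τx)
        (fun σ => Finsupp.single (S.node l k' ((o, σ) ::ₘ ↑L)) 1)
    + ∑ j : Fin L.length, TT (graft (t1,p1) τ1 (L.get j).2)
        (fun σ => Finsupp.single (S.node l k' ((o,τx) ::ₘ ↑(L.set j ((L.get j).1, σ)))) 1) := by
  rw [show ((o,τx) ::ₘ (↑L : Multiset (Odx Lp d × S.V))) = ↑((o,τx) :: L) from rfl,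
    hgraft t1 p1 τ1 l k' ((o,τx) :: L), msum_pf,
    sum_fin_cast (List.length_cons : ((o,τx) :: L).length = L.length + 1), Fin.sum_univ_succ]
  have h0 : ∀ i : Fin ((o,τx) :: L).length, i.val = 0 →
      S.replace l k' ((o,τx) :: L) i (graft (t1,p1) τ1 (((o,τx) :: L).get i).2)
        = TT (graft (t1,p1) τ1 τx)
            (fun σ => Finsupp.single (S.node l k' ((o, σ) ::ₘ ↑L)) 1) := by
    rintro ⟨iv, hi⟩ hv
    subst hv
    rw [replace_eq]
    rfl
  have hs : ∀ (i : Fin ((o,τx) :: L).length) (j : Fin L.length), i.val = j.val + 1 →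
      S.replace l k' ((o,τx) :: L) i (graft (t1,p1) τ1 (((o,τx) :: L).get i).2)
        = TT (graft (t1,p1) τ1 (L.get j).2)
            (fun σ => Finsupp.single (S.node l k' ((o,τx) ::ₘ ↑(L.set j ((L.get j).1, σ)))) 1) := by
    rintro ⟨iv, hi⟩ ⟨jv, hj⟩ hv
    subst hv
    rw [replace_eq]
    rfl
  rw [← add_assoc]
  congr 1
  · congr 1
    exact h0 _ (by simp)
  · exact Finset.sum_congr rfl fun j _ => hs _ j (by simp)

include hgraft in
lemma expandSet (t1 : Lp) (p1 : MIdx d) (τ1 : S.V) (l : Dr) (k : MIdx d)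
    (L : List (Odx Lp d × S.V)) (j : Fin L.length) (σ' : S.V) :
    graft (t1,p1) τ1 (S.node l k ↑(L.set j ((L.get j).1, σ'))) =
    (∑ ℓ' ∈ pf (k ⊓ p1), (mchoose k ℓ' : ℝ) •
       Finsupp.single (S.node l (k-ℓ')
         (((t1,p1-ℓ'),τ1) ::ₘ ↑(L.set j ((L.get j).1, σ')))) 1)
    + TT (graft (t1,p1) τ1 σ') (repF S l k L j)
    + ∑ j' ∈ Finset.univ.erase j, TT (graft (t1,p1) τ1 (L.get j').2)
        (fun σ'' => Finsupp.single
          (S.node l k ↑((L.set j ((L.get j).1, σ')).set j' ((L.get j').1, σ''))) 1) := by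
  have hlen : (L.set j ((L.get j).1, σ')).length = L.length := List.length_set
  rw [hgraft t1 p1 τ1 l k (L.set j ((L.get j).1, σ')), msum_pf, sum_fin_cast hlen]
  have hterm : ∀ (i : Fin (L.set j ((L.get j).1, σ')).length) (j' : Fin L.length),
      i.val = j'.val →
      S.replace l k (L.set j ((L.get j).1, σ')) i
        (graft (t1,p1) τ1 ((L.set j ((L.get j).1, σ')).get i).2)
        = (if j' = j then TT (graft (t1,p1) τ1 σ') (repF S l k L j)
           else TT (graft (t1,p1) τ1 (L.get j').2)
            (fun σ'' => Finsupp.single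
              (S.node l k
                ↑((L.set j ((L.get j).1, σ')).set j' ((L.get j').1, σ''))) 1)) := by
    rintro ⟨iv, hi⟩ j' hv
    have hv' : iv = (j' : ℕ) := hv
    subst hv'
    by_cases hj : j' = j
    · subst hj
      rw [if_pos rfl, replace_eq]
      have hget : (L.set j' ((L.get j').1, σ')).get ⟨(j' : ℕ), hi⟩
          = ((L.get j').1, σ') :=
        List.getElem_set_self (by simpa using j'.isLt)
      rw [hget]
      congr 1
      funext σ''
      simp only [repF]
      rw [hget, List.set_set]
    · rw [if_neg hj, replace_eq]
      have hne : (j : ℕ) ≠ (j' : ℕ) := fun h => hj (Fin.ext h.symm)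
      have hget : (L.set j ((L.get j).1, σ')).get ⟨(j' : ℕ), hi⟩ = L.get j' :=
        (List.getElem_set_ne hne _).trans (List.get_eq_getElem : L.get j' = L[(j' : ℕ)]).symm
      rw [hget]
      congr 1
      funext σ''
      simp only [repF]
      rw [hget]
  calc _ = (∑ ℓ' ∈ pf (k ⊓ p1), (mchoose k ℓ' : ℝ) •
       Finsupp.single (S.node l (k-ℓ')
         (((t1,p1-ℓ'),τ1) ::ₘ ↑(L.set j ((L.get j).1, σ')))) 1)
      + ∑ i : Fin L.length, (if i = j then TT (graft (t1,p1) τ1 σ') (repF S l k L j)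
           else TT (graft (t1,p1) τ1 (L.get i).2)
            (fun σ'' => Finsupp.single
              (S.node l k
                ↑((L.set j ((L.get j).1, σ')).set i ((L.get i).1, σ''))) 1)) := by
        congr 1
        exact Finset.sum_congr rfl fun i _ => hterm _ i rfl
    _ = _ := by
        rw [← Finset.add_sum_erase _ _ (Finset.mem_univ j), if_pos rfl, ← add_assoc]
        congr 1
        refine Finset.sum_congr rfl fun i hi => ?_
        rw [if_neg (Finset.mem_erase.mp hi).1]

/-- Double root-grafting term. -/
noncomputable def RR (t1 : Lp) (p1 : MIdx d) (τ1 : S.V) (t2 : Lp) (p2 : MIdx d) (τ2 : S.V)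
    (l : Dr) (k : MIdx d) (L : List (Odx Lp d × S.V)) : S.V →₀ ℝ :=
  ∑ ℓ ∈ pf (k ⊓ p2), ∑ ℓ' ∈ pf (k ⊓ p1),
    ((mchoose k ℓ : ℝ) * (mchoose (k-ℓ) ℓ' : ℝ)) •
      Finsupp.single (S.node l (k-ℓ-ℓ')
        (((t1,p1-ℓ'),τ1) ::ₘ ((t2,p2-ℓ),τ2) ::ₘ ↑L)) 1

/-- Root-and-branch mixed term. -/
noncomputable def MIX (t : Lp) (p : MIdx d) (τ : S.V) (t' : Lp) (p' : MIdx d) (τ' : S.V)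
    (l : Dr) (k : MIdx d) (L : List (Odx Lp d × S.V)) : S.V →₀ ℝ :=
  ∑ ℓ ∈ pf (k ⊓ p), (mchoose k ℓ : ℝ) •
    ∑ j : Fin L.length, TT (graft (t',p') τ' (L.get j).2)
      (fun σ => Finsupp.single
        (S.node l (k-ℓ) (((t,p-ℓ),τ) ::ₘ ↑(L.set j ((L.get j).1, σ)))) 1)

/-- Double branch-grafting term (distinct branches). -/
noncomputable def BB (o1 o2 : Odx Lp d) (τ1 τ2 : S.V) (l : Dr) (k : MIdx d)
    (L : List (Odx Lp d × S.V)) : S.V →₀ ℝ :=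
  ∑ j : Fin L.length, ∑ j' ∈ Finset.univ.erase j,
    TT (graft o2 τ2 (L.get j).2) (fun σ' => TT (graft o1 τ1 (L.get j').2)
      (fun σ'' => Finsupp.single
        (S.node l k ↑((L.set j ((L.get j).1, σ')).set j' ((L.get j').1, σ''))) 1))

lemma RR_symm (t1 : Lp) (p1 : MIdx d) (τ1 : S.V) (t2 : Lp) (p2 : MIdx d) (τ2 : S.V)
    (l : Dr) (k : MIdx d) (L : List (Odx Lp d × S.V)) :
    RR S t1 p1 τ1 t2 p2 τ2 l k L = RR S t2 p2 τ2 t1 p1 τ1 l k L := by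
  rw [RR, RR, Finset.sum_comm]
  refine Finset.sum_congr rfl fun a _ => Finset.sum_congr rfl fun b _ => ?_
  have h1 : (mchoose k b : ℝ) * (mchoose (k-b) a : ℝ)
      = (mchoose k a : ℝ) * (mchoose (k-a) b : ℝ) := by
    rw [← Nat.cast_mul, ← Nat.cast_mul, mchoose_comm]
  have h2 : k - b - a = k - a - b := by
    funext i
    simp only [Pi.sub_apply]
    omega
  rw [h1, h2, Multiset.cons_swap]

lemma erase_to_ite {n : ℕ} {M : Type*} [AddCommMonoid M] (f : Fin n → Fin n → M) :
    (∑ j, ∑ j' ∈ Finset.univ.erase j, f j j')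
      = ∑ j, ∑ j', if j' = j then 0 else f j j' := by
  refine Finset.sum_congr rfl fun j _ => ?_
  rw [← Finset.add_sum_erase _ _ (Finset.mem_univ j), if_pos rfl, zero_add]
  exact Finset.sum_congr rfl fun j' hj' => (if_neg (Finset.mem_erase.mp hj').1).symm

lemma BB_symm (o1 o2 : Odx Lp d) (τ1 τ2 : S.V) (l : Dr) (k : MIdx d)
    (L : List (Odx Lp d × S.V)) :
    BB S graft o1 o2 τ1 τ2 l k L = BB S graft o2 o1 τ2 τ1 l k L := by
  rw [BB, BB, erase_to_ite, erase_to_ite, Finset.sum_comm]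
  refine Finset.sum_congr rfl fun j _ => Finset.sum_congr rfl fun j' _ => ?_
  by_cases h : j = j'
  · subst h
    simp
  · rw [if_neg h, if_neg (fun hh => h hh.symm)]
    rw [TT_comm]
    congr 1
    funext σ'
    congr 1
    funext σ''
    have hne : (j' : ℕ) ≠ (j : ℕ) := fun hh => h (Fin.ext hh.symm)
    rw [List.set_comm _ _ hne]

include hgraft in
lemma key (t1 t2 : Lp) (p1 p2 : MIdx d) (τ1 τ2 : S.V) (l : Dr) (k : MIdx d)
    (L : List (Odx Lp d × S.V)) :
    Phi S graft (t1,p1) (t2,p2) τ1 τ2 (S.node l k ↑L)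
    = (∑ j : Fin L.length,
        TT (Phi S graft (t1,p1) (t2,p2) τ1 τ2 (L.get j).2) (repF S l k L j))
      - RR S t1 p1 τ1 t2 p2 τ2 l k L
      - MIX S graft t2 p2 τ2 t1 p1 τ1 l k L
      - MIX S graft t1 p1 τ1 t2 p2 τ2 l k L
      - BB S graft (t1,p1) (t2,p2) τ1 τ2 l k L := by
  have hA : TT (graft (t1,p1) τ1 τ2) (fun σ => graft (t2,p2) σ (S.node l k ↑L))
      = (∑ ℓ ∈ pf (k ⊓ p2), (mchoose k ℓ : ℝ) •
           TT (graft (t1,p1) τ1 τ2)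
             (fun σ => Finsupp.single (S.node l (k - ℓ) (((t2, p2 - ℓ), σ) ::ₘ ↑L)) (1:ℝ)))
        + ((∑ j : Fin L.length,
             TT (Phi S graft (t1,p1) (t2,p2) τ1 τ2 (L.get j).2) (repF S l k L j))
          + ∑ j : Fin L.length,
             TT (TT (graft (t2,p2) τ2 (L.get j).2) (graft (t1,p1) τ1))
               (repF S l k L j)) := by
    rw [expandA S graft hgraft]
    congr 1
    rw [← Finset.sum_add_distrib]
    refine Finset.sum_congr rfl fun j _ => ?_
    rw [← TT_add_w]
    congr 1
    rw [Phi, sub_add_cancel]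
  have hRRext : (∑ ℓ ∈ pf (k ⊓ p2), (mchoose k ℓ : ℝ) •
        ∑ ℓ' ∈ pf ((k-ℓ) ⊓ p1), (mchoose (k-ℓ) ℓ' : ℝ) •
          Finsupp.single (S.node l (k-ℓ-ℓ')
            (((t1,p1-ℓ'),τ1) ::ₘ ((t2,p2-ℓ),τ2) ::ₘ ↑L)) (1:ℝ))
      = RR S t1 p1 τ1 t2 p2 τ2 l k L := by
    rw [RR]
    refine Finset.sum_congr rfl fun ℓ hℓ => ?_
    have hsub : pf ((k-ℓ) ⊓ p1) ⊆ pf (k ⊓ p1) :=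
      pf_mono (inf_le_inf tsub_le_self le_rfl)
    have hvan : ∀ x ∈ pf (k ⊓ p1), x ∉ pf ((k-ℓ) ⊓ p1) →
        (mchoose (k-ℓ) x : ℝ) •
          Finsupp.single (S.node l (k-ℓ-x)
            (((t1,p1-x),τ1) ::ₘ ((t2,p2-ℓ),τ2) ::ₘ ↑L)) (1:ℝ) = 0 := by
      intro x hx hnx
      have h1 : ¬ x ≤ (k-ℓ) ⊓ p1 := fun h => hnx (mem_pf.mpr h)
      have h2 : x ≤ k ⊓ p1 := mem_pf.mp hx
      have h3 : ¬ x ≤ k - ℓ := fun h => h1 (le_inf h (h2.trans inf_le_right))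
      rw [mchoose_zero_of_not_le h3]
      simp
    rw [Finset.sum_subset hsub hvan, Finset.smul_sum]
    refine Finset.sum_congr rfl fun ℓ' _ => ?_
    rw [smul_smul]
  have hMIX12 : (∑ j : Fin L.length, TT (graft (t2,p2) τ2 (L.get j).2)
        (fun σ' => ∑ ℓ' ∈ pf (k ⊓ p1), (mchoose k ℓ' : ℝ) •
           Finsupp.single (S.node l (k-ℓ')
             (((t1,p1-ℓ'),τ1) ::ₘ ↑(L.set j ((L.get j).1, σ')))) (1:ℝ)))
      = MIX S graft t1 p1 τ1 t2 p2 τ2 l k L := by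
    rw [MIX]
    calc ∑ j : Fin L.length, TT (graft (t2,p2) τ2 (L.get j).2)
          (fun σ' => ∑ ℓ' ∈ pf (k ⊓ p1), (mchoose k ℓ' : ℝ) •
             Finsupp.single (S.node l (k-ℓ')
               (((t1,p1-ℓ'),τ1) ::ₘ ↑(L.set j ((L.get j).1, σ')))) (1:ℝ))
        = ∑ j : Fin L.length, ∑ ℓ' ∈ pf (k ⊓ p1),
            (mchoose k ℓ' : ℝ) • TT (graft (t2,p2) τ2 (L.get j).2)
              (fun σ' => Finsupp.single (S.node l (k-ℓ')
                (((t1,p1-ℓ'),τ1) ::ₘ ↑(L.set j ((L.get j).1, σ')))) (1:ℝ)) := by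
          refine Finset.sum_congr rfl fun j _ => ?_
          rw [TT_sum_f]
          exact Finset.sum_congr rfl fun ℓ' _ => TT_smul_f _ _ _
      _ = ∑ ℓ' ∈ pf (k ⊓ p1), ∑ j : Fin L.length,
            (mchoose k ℓ' : ℝ) • TT (graft (t2,p2) τ2 (L.get j).2)
              (fun σ' => Finsupp.single (S.node l (k-ℓ')
                (((t1,p1-ℓ'),τ1) ::ₘ ↑(L.set j ((L.get j).1, σ')))) (1:ℝ)) :=
          Finset.sum_comm
      _ = _ := Finset.sum_congr rfl fun ℓ' _ => (Finset.smul_sum).symm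
  have hB : TT (graft (t2,p2) τ2 (S.node l k ↑L)) (graft (t1,p1) τ1)
      = ((RR S t1 p1 τ1 t2 p2 τ2 l k L
          + (∑ ℓ ∈ pf (k ⊓ p2), (mchoose k ℓ : ℝ) •
              TT (graft (t1,p1) τ1 τ2)
                (fun σ => Finsupp.single
                  (S.node l (k - ℓ) (((t2, p2 - ℓ), σ) ::ₘ ↑L)) (1:ℝ))))
          + MIX S graft t2 p2 τ2 t1 p1 τ1 l k L)
        + (((MIX S graft t1 p1 τ1 t2 p2 τ2 l k L)
          + (∑ j : Fin L.length,
              TT (TT (graft (t2,p2) τ2 (L.get j).2) (graft (t1,p1) τ1))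
                (repF S l k L j)))
          + BB S graft (t1,p1) (t2,p2) τ1 τ2 l k L) := by
    rw [expandB1 S graft hgraft]
    congr 1
    · -- root-grafting part
      have hstep : ∀ ℓ ∈ pf (k ⊓ p2), (mchoose k ℓ : ℝ) •
            graft (t1,p1) τ1 (S.node l (k-ℓ) (((t2,p2-ℓ),τ2) ::ₘ ↑L))
          = (((mchoose k ℓ : ℝ) • ∑ ℓ' ∈ pf ((k-ℓ) ⊓ p1), (mchoose (k-ℓ) ℓ' : ℝ) •
                Finsupp.single (S.node l (k-ℓ-ℓ')
                  (((t1,p1-ℓ'),τ1) ::ₘ ((t2,p2-ℓ),τ2) ::ₘ ↑L)) (1:ℝ))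
              + (mchoose k ℓ : ℝ) • TT (graft (t1,p1) τ1 τ2)
                  (fun σ => Finsupp.single
                    (S.node l (k-ℓ) (((t2,p2-ℓ), σ) ::ₘ ↑L)) (1:ℝ)))
             + (mchoose k ℓ : ℝ) • ∑ j : Fin L.length,
                 TT (graft (t1,p1) τ1 (L.get j).2)
                   (fun σ => Finsupp.single
                     (S.node l (k-ℓ)
                       (((t2,p2-ℓ),τ2) ::ₘ ↑(L.set j ((L.get j).1, σ)))) (1:ℝ)) := by
        intro ℓ _
        rw [expandCons S graft hgraft t1 p1 τ1 l (k-ℓ) (t2,p2-ℓ) τ2 L,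
          smul_add, smul_add]
      rw [Finset.sum_congr rfl hstep, Finset.sum_add_distrib, Finset.sum_add_distrib,
        hRRext, MIX]
    · -- branch-grafting part
      have hstep : ∀ j : Fin L.length, (fun _ : Finset (Fin L.length) => True) Finset.univ →
          True := fun _ _ => trivial
      have hexp : ∀ j : Fin L.length, j ∈ (Finset.univ : Finset (Fin L.length)) →
          TT (graft (t2,p2) τ2 (L.get j).2)
            (fun σ' => graft (t1,p1) τ1 (S.node l k ↑(L.set j ((L.get j).1, σ'))))
          = ((TT (graft (t2,p2) τ2 (L.get j).2)
               (fun σ' => ∑ ℓ' ∈ pf (k ⊓ p1), (mchoose k ℓ' : ℝ) •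
                  Finsupp.single (S.node l (k-ℓ')
                    (((t1,p1-ℓ'),τ1) ::ₘ ↑(L.set j ((L.get j).1, σ')))) (1:ℝ))
             + TT (graft (t2,p2) τ2 (L.get j).2)
                 (fun σ' => TT (graft (t1,p1) τ1 σ') (repF S l k L j)))
            + TT (graft (t2,p2) τ2 (L.get j).2)
                (fun σ' => ∑ j' ∈ Finset.univ.erase j,
                  TT (graft (t1,p1) τ1 (L.get j').2)
                    (fun σ'' => Finsupp.single
                      (S.node l k
                        ↑((L.set j ((L.get j).1, σ')).set j'
                          ((L.get j').1, σ''))) (1:ℝ)))) := by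
        intro j _
        have he : (fun σ' => graft (t1,p1) τ1
            (S.node l k ↑(L.set j ((L.get j).1, σ'))))
          = fun σ' =>
            ((∑ ℓ' ∈ pf (k ⊓ p1), (mchoose k ℓ' : ℝ) •
                Finsupp.single (S.node l (k-ℓ')
                  (((t1,p1-ℓ'),τ1) ::ₘ ↑(L.set j ((L.get j).1, σ')))) (1:ℝ))
              + TT (graft (t1,p1) τ1 σ') (repF S l k L j))
            + ∑ j' ∈ Finset.univ.erase j,
                TT (graft (t1,p1) τ1 (L.get j').2)
                  (fun σ'' => Finsupp.single
                    (S.node l k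
                      ↑((L.set j ((L.get j).1, σ')).set j'
                        ((L.get j').1, σ''))) (1:ℝ)) :=
          funext fun σ' => expandSet S graft hgraft t1 p1 τ1 l k L j σ'
        rw [he, TT_add_f, TT_add_f]
      have hT2 : (∑ j : Fin L.length, TT (graft (t2,p2) τ2 (L.get j).2)
            (fun σ' => TT (graft (t1,p1) τ1 σ') (repF S l k L j)))
          = ∑ j : Fin L.length,
              TT (TT (graft (t2,p2) τ2 (L.get j).2) (graft (t1,p1) τ1))
                (repF S l k L j) :=
        Finset.sum_congr rfl fun j _ => (TT_comp _ _ _).symm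
      have hT3 : (∑ j : Fin L.length, TT (graft (t2,p2) τ2 (L.get j).2)
            (fun σ' => ∑ j' ∈ Finset.univ.erase j,
              TT (graft (t1,p1) τ1 (L.get j').2)
                (fun σ'' => Finsupp.single
                  (S.node l k
                    ↑((L.set j ((L.get j).1, σ')).set j'
                      ((L.get j').1, σ''))) (1:ℝ))))
          = BB S graft (t1,p1) (t2,p2) τ1 τ2 l k L := by
        rw [BB]
        exact Finset.sum_congr rfl fun j _ => TT_sum_f _ _ _
      rw [Finset.sum_congr rfl hexp, Finset.sum_add_distrib, Finset.sum_add_distrib,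
        hMIX12, hT2, hT3]
  rw [Phi, hA, hB]
  abel

end Graft
end Aux
/-- identity `pre_lie_identity`: the multi-pre-Lie identity for the
grafting operators on decorated trees, with the grafting operators extended bilinearly
to `𝕍`. -/
theorem statement14
    {d : ℕ} {Lp Dr : Type} [Fintype Lp] [DecidableEq Lp]
    (S : TreeV Lp Dr d)
    (graft : Odx Lp d → S.V → S.V → (S.V →₀ ℝ)) (hgraft : S.GraftSpec graft) :
    ∀ (t₁ t₂ : Lp) (p₁ p₂ : MIdx d) (τ₁ τ₂ τ₃ : S.V),
      (((graft (t₁, p₁) τ₁ τ₂).sum fun σ c => c • graft (t₂, p₂) σ τ₃)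
        - (graft (t₂, p₂) τ₂ τ₃).sum fun σ c => c • graft (t₁, p₁) τ₁ σ) =
      (((graft (t₂, p₂) τ₂ τ₁).sum fun σ c => c • graft (t₁, p₁) σ τ₃)
        - (graft (t₁, p₁) τ₁ τ₃).sum fun σ c => c • graft (t₂, p₂) τ₂ σ) := by
  intro t₁ t₂ p₁ p₂ τ₁ τ₂ τ₃
  have main : ∀ τ3 : S.V, ∀ (t1 t2 : Lp) (p1 p2 : MIdx d) (τ1 τ2 : S.V),
      Aux.Phi S graft (t1,p1) (t2,p2) τ1 τ2 τ3
        = Aux.Phi S graft (t2,p2) (t1,p1) τ2 τ1 τ3 := by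
    intro τ3
    refine S.ind (fun τ3 => ∀ (t1 t2 : Lp) (p1 p2 : MIdx d) (τ1 τ2 : S.V),
      Aux.Phi S graft (t1,p1) (t2,p2) τ1 τ2 τ3
        = Aux.Phi S graft (t2,p2) (t1,p1) τ2 τ1 τ3) ?_ τ3
    intro l k M hIH
    obtain ⟨L, rfl⟩ : ∃ L : List (Odx Lp d × S.V), (↑L : Multiset _) = M :=
      ⟨M.toList, Multiset.coe_toList M⟩
    intro t1 t2 p1 p2 τ1 τ2
    rw [Aux.key S graft hgraft t1 t2 p1 p2 τ1 τ2 l k L,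
      Aux.key S graft hgraft t2 t1 p2 p1 τ2 τ1 l k L,
      Aux.RR_symm S t1 p1 τ1 t2 p2 τ2 l k L,
      Aux.BB_symm S graft (t1,p1) (t2,p2) τ1 τ2 l k L]
    have hsum : (∑ j : Fin L.length,
          Aux.TT (Aux.Phi S graft (t1,p1) (t2,p2) τ1 τ2 (L.get j).2)
            (Aux.repF S l k L j))
        = ∑ j : Fin L.length,
            Aux.TT (Aux.Phi S graft (t2,p2) (t1,p1) τ2 τ1 (L.get j).2)
              (Aux.repF S l k L j) :=
      Finset.sum_congr rfl fun j _ => by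
        rw [hIH (L.get j) (Multiset.mem_coe.mpr (by simpa using List.get_mem L j.1 j.2)) t1 t2 p1 p2 τ1 τ2]
    rw [hsum]
    abel
  have h := main τ₃ t₁ t₂ p₁ p₂ τ₁ τ₂
  simpa [Aux.Phi, Aux.TT] using h

end SPDERenorm
end

section
/- Duality between grafting/raising and cutting/lowering on 𝕍 (Definitions 'def_grafting_explicit', 'def_increasing_poly' together with Remark 'rem:formula for hgraft'): For every (𝔱,p) ∈ 𝒪, the recursively defined grafting operator ⋖̂_{(𝔱,p)} is adjoint to the cutting operator ⋖̂*_{(𝔱,p)}: 𝕍 → 𝕍 ⊗ 𝕍 given on trees τ = T^𝔪_𝔣 by ⋖̂*_{(𝔱,p)} τ := Σ_{0≤k≤p} Σ_{(x,y)∈E_T} (1_{𝔣(x,y)=(𝔱,k)}/(p−k)!) · P^{(x,y)}τ ⊗ (R^{(x,y)}τ)+_x^{p−k}; that is, ⟨τ ⋖̂_{(𝔱,p)} τ̄, σ⟩ = ⟨τ ⊗ τ̄, ⋖̂*_{(𝔱,p)} σ⟩ for all τ, τ̄, σ ∈ 𝒱. Similarly, for every i ∈ {0,…,d}, ⟨↑̂_i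 τ̄, τ⟩ = ⟨τ̄, ↑̂*_i τ⟩ for all τ, τ̄ ∈ 𝒱, where ↑̂*_i τ := Σ_{x∈N_T} 𝔪^X(x)[i] · τ−_x^{e_i}. -/
/-
Common framework: multi-indices, the algebra of smooth functions on ℝ^𝒪,
and the spaces of decorated trees 𝒱 and 𝔅 of [Bruned–Chandra–Chevyrev–Hairer,
"Renormalising SPDEs in regularity structures"], presented abstractly together
with the defining recursions of the various operators on them.
-/

open scoped BigOperators Classical

namespace SPDERenorm

/-! ### Auxiliary lemmas for Statement 15 -/

section Statement15Aux

variable {d : ℕ} {Lp Dr : Type}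

private lemma mfact_pos' (k : MIdx d) : 0 < mfact k :=
  Finset.prod_pos fun i _ => Nat.factorial_pos (k i)

private lemma mfact_add_unit (k : MIdx d) (i : Fin (d+1)) :
    mfact (k + munit i) = (k i + 1) * mfact k := by
  unfold mfact
  rw [← Finset.mul_prod_erase Finset.univ _ (Finset.mem_univ i),
    ← Finset.mul_prod_erase Finset.univ (fun j => Nat.factorial (k j)) (Finset.mem_univ i)]
  have h1 : (k + munit i) i = k i + 1 := by simp [munit]
  have h2 : ∀ j ∈ Finset.univ.erase i, Nat.factorial ((k + munit i) j) = Nat.factorial (k j) := by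
    intro j hj
    have : (munit i : MIdx d) j = 0 := Pi.single_eq_of_ne (Finset.ne_of_mem_erase hj) 1
    simp [this]
  rw [Finset.prod_congr rfl h2, h1, Nat.factorial_succ, mul_assoc]

private lemma mchoose_mul_mfact {k l : MIdx d} (h : l ≤ k) :
    mchoose k l * (mfact l * mfact (k - l)) = mfact k := by
  unfold mchoose mfact
  rw [← Finset.prod_mul_distrib, ← Finset.prod_mul_distrib]
  refine Finset.prod_congr rfl fun i _ => ?_
  have hkl : (k - l) i = k i - l i := rfl
  rw [hkl, ← mul_assoc]
  exact Nat.choose_mul_factorial_mul_factorial (h i)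

private lemma msum_eq_of (m ℓ₀ : MIdx d) (hm : ℓ₀ ≤ m) (f : MIdx d → ℝ) (g : ℝ)
    (h : ∀ ℓ, ℓ ≤ m → f ℓ = if ℓ = ℓ₀ then g else 0) :
    msum m f = g := by
  unfold msum
  have hle : ∀ e : (∀ i : Fin (d+1), Fin (m i + 1)), (fun i => ((e i : ℕ)) : MIdx d) ≤ m :=
    fun e i => Nat.lt_succ_iff.mp (e i).isLt
  rw [Finset.sum_congr rfl fun e _ => h _ (hle e)]
  set e₀ : (∀ i : Fin (d+1), Fin (m i + 1)) := fun i => ⟨ℓ₀ i, Nat.lt_succ_of_le (hm i)⟩ with he₀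
  have hiff : ∀ e : (∀ i : Fin (d+1), Fin (m i + 1)),
      ((fun i => ((e i : ℕ)) : MIdx d) = ℓ₀) ↔ e = e₀ := by
    intro e
    constructor
    · intro he; funext i; exact Fin.ext (congrFun he i)
    · intro he; subst he; rfl
  rw [Finset.sum_congr rfl fun e _ => by rw [if_congr (hiff e) rfl rfl]]
  rw [Finset.sum_ite_eq' Finset.univ e₀ fun _ => g, if_pos (Finset.mem_univ e₀)]

private lemma msum_eq_zero (m : MIdx d) (f : MIdx d → ℝ)
    (h : ∀ ℓ, ℓ ≤ m → f ℓ = 0) : msum m f = 0 := by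
  unfold msum
  exact Finset.sum_eq_zero fun e _ => h _ fun i => Nat.lt_succ_iff.mp (e i).isLt

/-! Generic list/multiset helpers -/

private lemma cons_eraseIdx {α : Type*} : ∀ (L : List α) (j : Fin L.length),
    (L.get j ::ₘ (↑(L.eraseIdx j) : Multiset α)) = ↑L := by
  intro L
  induction L with
  | nil => exact fun j => absurd j.isLt (by simp)
  | cons a L ih =>
    intro j
    cases j using Fin.cases with
    | zero => simp
    | succ i =>
      show L.get i ::ₘ ((a :: L.eraseIdx i : List α) : Multiset α) = _
      rw [show ((a :: L.eraseIdx i : List α) : Multiset α) = a ::ₘ ↑(L.eraseIdx i) from rfl,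
        Multiset.cons_swap, ih i]
      rfl

private lemma coe_set_eq {α : Type*} : ∀ (L : List α) (j : Fin L.length) (x : α),
    (↑(L.set j x) : Multiset α) = x ::ₘ ↑(L.eraseIdx j) := by
  intro L
  induction L with
  | nil => exact fun j => absurd j.isLt (by simp)
  | cons a L ih =>
    intro j x
    cases j using Fin.cases with
    | zero => simp [List.set]
    | succ i =>
      show ((a :: L.set i x : List α) : Multiset α) = _
      rw [show ((a :: L.set i x : List α) : Multiset α) = a ::ₘ ↑(L.set i x) from rfl, ih i,
        Multiset.cons_swap]
      rfl

private lemma sum_if_get_eq {α : Type*} [DecidableEq α] : ∀ (L : List α) (x : α) (c : ℝ),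
    (∑ j : Fin L.length, if L.get j = x then c else 0)
      = (Multiset.count x (↑L : Multiset α) : ℝ) * c := by
  intro L
  induction L with
  | nil => simp
  | cons a L ih =>
    intro x c
    have e1 : (∑ j : Fin (a::L).length, if (a::L).get j = x then c else 0)
        = (if a = x then c else 0) + ∑ j : Fin L.length, (if L.get j = x then c else 0) := by
      rw [show (∑ j : Fin (a::L).length, if (a::L).get j = x then c else 0)
          = ∑ j : Fin (L.length+1), if (a::L).get j = x then c else 0 from rfl, Fin.sum_univ_succ]
      rfl
    rw [e1, ih x c, show ((a :: L : List α) : Multiset α) = a ::ₘ ↑L from rfl,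
      Multiset.count_cons]
    by_cases h : a = x <;> by_cases h2 : x = a <;>
      first
        | (exact absurd h2.symm h)
        | (exact absurd h.symm h2)
        | (rw [if_pos h, if_pos h2]; push_cast; ring)
        | (rw [if_neg h, if_neg h2]; push_cast; ring)

private lemma finsupp_sum_single_eval {γ δ : Type*} (w : γ →₀ ℝ) (Φ : γ → δ) (z : δ) (y₀ : γ)
    (h : ∀ y, Φ y = z ↔ y = y₀) :
    (w.sum fun y c => Finsupp.single (Φ y) c) z = w y₀ := by
  classical
  rw [Finsupp.sum_apply, Finsupp.sum]
  have hc : ∀ y ∈ w.support, (Finsupp.single (Φ y) (w y)) z = if y = y₀ then w y else 0 := by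
    intro y _
    rw [Finsupp.single_apply, ← h y]
  rw [Finset.sum_congr rfl hc, Finset.sum_ite_eq' w.support y₀ (fun y => w y)]
  split_ifs with hy
  · rfl
  · exact (Finsupp.notMem_support_iff.mp hy).symm

private lemma finsupp_sum_single_eval_zero {γ δ : Type*} (w : γ →₀ ℝ) (Φ : γ → δ) (z : δ)
    (h : ∀ y, Φ y ≠ z) :
    (w.sum fun y c => Finsupp.single (Φ y) c) z = 0 := by
  classical
  rw [Finsupp.sum_apply, Finsupp.sum]
  exact Finset.sum_eq_zero fun y _ => by rw [Finsupp.single_apply, if_neg (h y)]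

/-! Pairing reductions -/

private lemma pair_sum {V : Type*} [DecidableEq V] (sym : V → ℕ) (w : V →₀ ℝ) (σ : V) :
    (w.sum fun a c => c * (if a = σ then (sym a : ℝ) else 0)) = w σ * (sym σ : ℝ) := by
  classical
  rw [Finsupp.sum]
  have hc : ∀ a ∈ w.support,
      w a * (if a = σ then (sym a : ℝ) else 0) = if a = σ then w σ * (sym σ : ℝ) else 0 := by
    intro a _
    by_cases h : a = σ
    · subst h; rw [if_pos rfl, if_pos rfl]
    · rw [if_neg h, if_neg h, mul_zero]
  rw [Finset.sum_congr rfl hc, Finset.sum_ite_eq' w.support σ]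
  split_ifs with hy
  · rfl
  · rw [Finsupp.notMem_support_iff.mp hy, zero_mul]

private lemma pair_sum_flip {V : Type*} [DecidableEq V] (sym : V → ℕ) (w : V →₀ ℝ) (σ : V) :
    (w.sum fun a c => c * (if σ = a then (sym σ : ℝ) else 0)) = w σ * (sym σ : ℝ) := by
  classical
  rw [Finsupp.sum]
  have hc : ∀ a ∈ w.support,
      w a * (if σ = a then (sym σ : ℝ) else 0) = if a = σ then w σ * (sym σ : ℝ) else 0 := by
    intro a _
    by_cases h : a = σ
    · subst h; rw [if_pos rfl, if_pos rfl]
    · rw [if_neg (fun hh => h hh.symm), if_neg h, mul_zero]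
  rw [Finset.sum_congr rfl hc, Finset.sum_ite_eq' w.support σ]
  split_ifs with hy
  · rfl
  · rw [Finsupp.notMem_support_iff.mp hy, zero_mul]

private lemma pair_sum2 {V : Type*} [DecidableEq V] (sym : V → ℕ) (w : V × V →₀ ℝ) (τ τb : V) :
    (w.sum fun ab c => c * ((if τ = ab.1 then (sym τ : ℝ) else 0)
        * (if τb = ab.2 then (sym τb : ℝ) else 0)))
      = w (τ, τb) * (sym τ : ℝ) * (sym τb : ℝ) := by
  classical
  rw [Finsupp.sum]
  have hc : ∀ ab ∈ w.support,
      w ab * ((if τ = ab.1 then (sym τ : ℝ) else 0) * (if τb = ab.2 then (sym τb : ℝ) else 0))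
        = if ab = (τ, τb) then w (τ, τb) * (sym τ : ℝ) * (sym τb : ℝ) else 0 := by
    intro ab _
    by_cases h : ab = (τ, τb)
    · subst h; rw [if_pos rfl, if_pos rfl, if_pos rfl]; ring
    · rw [if_neg h]
      by_cases h1 : τ = ab.1
      · by_cases h2 : τb = ab.2
        · exact absurd (Prod.ext h1.symm h2.symm) h
        · rw [if_neg h2, mul_zero, mul_zero]
      · rw [if_neg h1, zero_mul, mul_zero]
  rw [Finset.sum_congr rfl hc, Finset.sum_ite_eq' w.support (τ, τb)]
  split_ifs with hy
  · rfl
  · rw [Finsupp.notMem_support_iff.mp hy, zero_mul, zero_mul]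

end Statement15Aux

section Statement15Core

variable {d : ℕ} {Lp Dr : Type} [DecidableEq Lp]
variable (S : TreeV Lp Dr d) [DecidableEq S.V]

private lemma node_inj {l l' : Dr} {k k' : MIdx d}
    {M M' : Multiset (Odx Lp d × S.V)} (h : S.node l k M = S.node l' k' M') :
    l = l' ∧ k = k' ∧ M = M' := by
  have h2 := S.node_bij.injective (a₁ := (l, k, M)) (a₂ := (l', k', M')) h
  refine ⟨congrArg (fun x => x.1) h2, congrArg (fun x => x.2.1) h2,
    congrArg (fun x => x.2.2) h2⟩

/-- The branch part of the symmetry factor. -/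
private noncomputable def Wfac (sym : S.V → ℕ) (M : Multiset (Odx Lp d × S.V)) : ℕ :=
  ∏ x ∈ M.toFinset, Nat.factorial (M.count x) * sym x.2 ^ M.count x

variable (sym : S.V → ℕ)

private lemma sym_node (hsym : S.SymSpec sym) (l : Dr) (k : MIdx d)
    (M : Multiset (Odx Lp d × S.V)) :
    sym (S.node l k M) = mfact k * Wfac S sym M := hsym l k M

private lemma Wfac_cons (x : Odx Lp d × S.V) (M : Multiset (Odx Lp d × S.V)) :
    Wfac S sym (x ::ₘ M) = (M.count x + 1) * sym x.2 * Wfac S sym M := by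
  classical
  unfold Wfac
  by_cases hx : x ∈ M
  · have hxF : x ∈ M.toFinset := Multiset.mem_toFinset.mpr hx
    have ht : (x ::ₘ M).toFinset = M.toFinset := by
      rw [Multiset.toFinset_cons, Finset.insert_eq_self.mpr hxF]
    rw [ht, ← Finset.mul_prod_erase _ _ hxF,
      ← Finset.mul_prod_erase _ (fun y => Nat.factorial (M.count y) * sym y.2 ^ M.count y) hxF]
    have hrest : ∀ y ∈ M.toFinset.erase x,
        Nat.factorial ((x ::ₘ M).count y) * sym y.2 ^ ((x ::ₘ M).count y)
          = Nat.factorial (M.count y) * sym y.2 ^ M.count y := by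
      intro y hy
      rw [Multiset.count_cons, if_neg (Finset.ne_of_mem_erase hy), add_zero]
    rw [Finset.prod_congr rfl hrest, Multiset.count_cons_self, Nat.factorial_succ, pow_succ]
    ring
  · have hxF : x ∉ M.toFinset := fun h => hx (Multiset.mem_toFinset.mp h)
    rw [Multiset.toFinset_cons, Finset.prod_insert hxF, Multiset.count_cons_self,
      Multiset.count_eq_zero.mpr hx]
    have hrest : ∀ y ∈ M.toFinset,
        Nat.factorial ((x ::ₘ M).count y) * sym y.2 ^ ((x ::ₘ M).count y)
          = Nat.factorial (M.count y) * sym y.2 ^ M.count y := by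
      intro y hy
      rw [Multiset.count_cons, if_neg (fun (h : y = x) => hxF (h ▸ hy)), add_zero]
    rw [Finset.prod_congr rfl hrest]
    simp [Nat.factorial]

/-- The core evaluation/counting identity. -/
private lemma eval_core (hsym : S.SymSpec sym) (l lb : Dr) (k kb : MIdx d)
    (L : List (Odx Lp d × S.V)) (o : Odx Lp d) (Rb : Multiset (Odx Lp d × S.V))
    (E : ℝ) (f : S.V → ℝ)
    (hpos : ∀ b₀, (↑L : Multiset (Odx Lp d × S.V)) = (o, b₀) ::ₘ Rb → l = lb → k = kb →
      E = f b₀)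
    (hzero : ¬ (l = lb ∧ k = kb ∧ ∃ b₀, (↑L : Multiset (Odx Lp d × S.V)) = (o, b₀) ::ₘ Rb) →
      E = 0) :
    E * (sym (S.node l k ↑L) : ℝ)
      = ∑ j' : Fin L.length,
          if l = lb ∧ k = kb ∧ (L.get j').1 = o ∧
              (↑(L.eraseIdx j') : Multiset (Odx Lp d × S.V)) = Rb
          then f ((L.get j').2) * (sym ((L.get j').2) : ℝ)
              * ((mfact k : ℝ) * (Wfac S sym ↑(L.eraseIdx j') : ℝ))
          else 0 := by
  classical
  by_cases hlk : l = lb ∧ k = kb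
  · obtain ⟨h1, h2⟩ := hlk
    subst h1; subst h2
    by_cases hex : ∃ b₀, (↑L : Multiset (Odx Lp d × S.V)) = (o, b₀) ::ₘ Rb
    · obtain ⟨b₀, hb₀⟩ := hex
      rw [hpos b₀ hb₀ rfl rfl]
      have hcond : ∀ j' : Fin L.length,
          (l = l ∧ k = k ∧ (L.get j').1 = o ∧
              (↑(L.eraseIdx j') : Multiset (Odx Lp d × S.V)) = Rb) ↔ L.get j' = (o, b₀) := by
        intro j'
        constructor
        · rintro ⟨-, -, h3, h4⟩
          have h5 := cons_eraseIdx L j'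
          rw [h4, hb₀] at h5
          exact Multiset.cons_inj_left _ |>.mp h5
        · intro h3
          refine ⟨rfl, rfl, by rw [h3], ?_⟩
          have h5 := cons_eraseIdx L j'
          rw [h3, hb₀] at h5
          exact (Multiset.cons_inj_right _).mp h5
      have hval : ∀ j' : Fin L.length,
          (if l = l ∧ k = k ∧ (L.get j').1 = o ∧
              (↑(L.eraseIdx j') : Multiset (Odx Lp d × S.V)) = Rb
          then f ((L.get j').2) * (sym ((L.get j').2) : ℝ)
              * ((mfact k : ℝ) * (Wfac S sym ↑(L.eraseIdx j') : ℝ))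
          else 0)
          = if L.get j' = (o, b₀)
            then f b₀ * (sym b₀ : ℝ) * ((mfact k : ℝ) * (Wfac S sym Rb : ℝ)) else 0 := by
        intro j'
        by_cases hj : L.get j' = (o, b₀)
        · rw [if_pos (hcond j' |>.mpr hj), if_pos hj]
          obtain ⟨-, -, -, h4⟩ := hcond j' |>.mpr hj
          rw [h4, hj]
        · rw [if_neg (fun hc => hj (hcond j' |>.mp hc)), if_neg hj]
      rw [Finset.sum_congr rfl fun j' _ => hval j', sum_if_get_eq,
        sym_node S sym hsym, hb₀, Wfac_cons, Multiset.count_cons_self]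
      push_cast
      ring
    · rw [hzero (fun hc => hex hc.2.2), zero_mul]
      symm
      refine Finset.sum_eq_zero fun j' _ => ?_
      rw [if_neg]
      rintro ⟨-, -, h3, h4⟩
      refine hex ⟨(L.get j').2, ?_⟩
      have h5 := cons_eraseIdx L j'
      rw [h4] at h5
      rw [← h5, ← h3]
  · rw [hzero (fun hc => hlk ⟨hc.1, hc.2.1⟩), zero_mul]
    symm
    refine Finset.sum_eq_zero fun j' _ => ?_
    exact if_neg (fun hc => hlk ⟨hc.1, hc.2.1⟩)

end Statement15Core

section Statement15Main

variable {d : ℕ} {Lp Dr : Type} [DecidableEq Lp]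
variable (S : TreeV Lp Dr d) [DecidableEq S.V] (sym : S.V → ℕ)

private lemma replace_eq (l : Dr) (k : MIdx d) (L : List (Odx Lp d × S.V)) (j : Fin L.length)
    (w : S.V →₀ ℝ) :
    S.replace l k L j w
      = w.sum fun τ' c => Finsupp.single
          (S.node l k (((L.get j).1, τ') ::ₘ (↑(L.eraseIdx j) : Multiset (Odx Lp d × S.V)))) c := by
  unfold TreeV.replace
  refine Finsupp.sum_congr fun τ' _ => ?_
  rw [coe_set_eq]

private lemma replace_eval (hsym : S.SymSpec sym) (l lb : Dr) (k kb : MIdx d)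
    (L Lb : List (Odx Lp d × S.V)) (j : Fin Lb.length) (w : S.V →₀ ℝ) :
    (S.replace lb kb Lb j w) (S.node l k ↑L) * (sym (S.node l k ↑L) : ℝ)
      = ∑ j' : Fin L.length,
          if l = lb ∧ k = kb ∧ (L.get j').1 = (Lb.get j).1 ∧
              (↑(L.eraseIdx j') : Multiset (Odx Lp d × S.V)) = ↑(Lb.eraseIdx j)
          then w ((L.get j').2) * (sym ((L.get j').2) : ℝ)
              * ((mfact k : ℝ) * (Wfac S sym ↑(L.eraseIdx j') : ℝ))
          else 0 := by
  rw [replace_eq]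
  refine eval_core S sym hsym l lb k kb L (Lb.get j).1 (↑(Lb.eraseIdx j)) _ (fun b => w b)
    ?_ ?_
  · intro b₀ hb₀ hll hkk
    refine finsupp_sum_single_eval w _ _ b₀ fun y => ?_
    constructor
    · intro he
      obtain ⟨h1, h2, h3⟩ := node_inj S he
      rw [hb₀] at h3
      have h4 := (Multiset.cons_inj_left _).mp h3
      exact congrArg Prod.snd h4
    · rintro rfl
      rw [hb₀, hll, hkk]
  · intro hno
    refine finsupp_sum_single_eval_zero w _ _ fun y he => ?_
    obtain ⟨h1, h2, h3⟩ := node_inj S he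
    exact hno ⟨h1.symm, h2.symm, y, h3.symm⟩

private lemma cutpair_eval (hsym : S.SymSpec sym) (l lb : Dr) (k kb : MIdx d)
    (L Lb : List (Odx Lp d × S.V)) (j : Fin Lb.length) (w : S.V × S.V →₀ ℝ) (τ : S.V) :
    (w.sum fun ab c =>
        Finsupp.single (ab.1, S.node lb kb ↑(Lb.set j ((Lb.get j).1, ab.2))) c)
        (τ, S.node l k ↑L) * (sym (S.node l k ↑L) : ℝ)
      = ∑ j' : Fin L.length,
          if l = lb ∧ k = kb ∧ (L.get j').1 = (Lb.get j).1 ∧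
              (↑(L.eraseIdx j') : Multiset (Odx Lp d × S.V)) = ↑(Lb.eraseIdx j)
          then w (τ, (L.get j').2) * (sym ((L.get j').2) : ℝ)
              * ((mfact k : ℝ) * (Wfac S sym ↑(L.eraseIdx j') : ℝ))
          else 0 := by
  have hw : (w.sum fun ab c =>
        Finsupp.single (ab.1, S.node lb kb ↑(Lb.set j ((Lb.get j).1, ab.2))) c)
      = w.sum fun ab c => Finsupp.single
          (ab.1, S.node lb kb (((Lb.get j).1, ab.2) ::ₘ
            (↑(Lb.eraseIdx j) : Multiset (Odx Lp d × S.V)))) c := by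
    refine Finsupp.sum_congr fun ab _ => ?_
    rw [coe_set_eq]
  rw [hw]
  refine eval_core S sym hsym l lb k kb L (Lb.get j).1 (↑(Lb.eraseIdx j)) _
    (fun b => w (τ, b)) ?_ ?_
  · intro b₀ hb₀ hll hkk
    refine finsupp_sum_single_eval w _ _ (τ, b₀) fun y => ?_
    constructor
    · intro he
      have h1 : y.1 = τ := congrArg Prod.fst he
      have h2 : S.node lb kb (((Lb.get j).1, y.2) ::ₘ
          (↑(Lb.eraseIdx j) : Multiset (Odx Lp d × S.V))) = S.node l k ↑L :=
        congrArg Prod.snd he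
      obtain ⟨h3, h4, h5⟩ := node_inj S h2
      rw [hb₀] at h5
      have h6 := (Multiset.cons_inj_left _).mp h5
      have h7 : y.2 = b₀ := congrArg Prod.snd h6
      exact Prod.ext h1 h7
    · rintro rfl
      show ((τ : S.V), _) = (τ, S.node l k (↑L : Multiset (Odx Lp d × S.V)))
      rw [hb₀, hll, hkk]
  · intro hno
    refine finsupp_sum_single_eval_zero w _ _ fun y he => ?_
    have h2 : S.node lb kb (((Lb.get j).1, y.2) ::ₘ
        (↑(Lb.eraseIdx j) : Multiset (Odx Lp d × S.V))) = S.node l k ↑L :=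
      congrArg Prod.snd he
    obtain ⟨h3, h4, h5⟩ := node_inj S h2
    exact hno ⟨h3.symm, h4.symm, y.2, h5.symm⟩

private lemma claim_branch (hsym : S.SymSpec sym)
    (graft : Odx Lp d → S.V → S.V → (S.V →₀ ℝ)) (cutV : Odx Lp d → S.V → (S.V × S.V →₀ ℝ))
    (t : Lp) (p : MIdx d) (l l' : Dr) (k k' : MIdx d)
    (L L' : List (Odx Lp d × S.V)) (τ : S.V)
    (IH : ∀ j' : Fin L'.length, ∀ τ₀ τb₀ : S.V,
        ((graft (t, p) τ₀ τb₀) ((L'.get j').2)) * (sym ((L'.get j').2) : ℝ)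
          = ((cutV (t, p) ((L'.get j').2)) (τ₀, τb₀)) * (sym τ₀ : ℝ) * (sym τb₀ : ℝ)) :
    (∑ j : Fin L.length, S.replace l k L j (graft (t, p) τ (L.get j).2)) (S.node l' k' ↑L')
        * (sym (S.node l' k' ↑L') : ℝ)
    = (∑ j' : Fin L'.length, (cutV (t, p) ((L'.get j').2)).sum fun ab c =>
          Finsupp.single (ab.1, S.node l' k' ↑(L'.set j' ((L'.get j').1, ab.2))) c)
        (τ, S.node l k ↑L) * ((sym τ : ℝ) * (sym (S.node l k ↑L) : ℝ)) := by
  rw [Finset.sum_apply', Finset.sum_apply', Finset.sum_mul, Finset.sum_mul]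
  rw [Finset.sum_congr rfl fun j _ => replace_eval S sym hsym l' l k' k L' L j _]
  have hR : ∀ j' : Fin L'.length,
      ((cutV (t, p) ((L'.get j').2)).sum fun ab c =>
          Finsupp.single (ab.1, S.node l' k' ↑(L'.set j' ((L'.get j').1, ab.2))) c)
        (τ, S.node l k ↑L) * ((sym τ : ℝ) * (sym (S.node l k ↑L) : ℝ))
      = (∑ j : Fin L.length,
          if l = l' ∧ k = k' ∧ (L.get j).1 = (L'.get j').1 ∧
              (↑(L.eraseIdx j) : Multiset (Odx Lp d × S.V)) = ↑(L'.eraseIdx j')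
          then (cutV (t, p) ((L'.get j').2)) (τ, (L.get j).2) * (sym ((L.get j).2) : ℝ)
              * ((mfact k : ℝ) * (Wfac S sym ↑(L.eraseIdx j) : ℝ))
          else 0) * (sym τ : ℝ) := by
    intro j'
    rw [← cutpair_eval S sym hsym l l' k k' L L' j' (cutV (t, p) ((L'.get j').2)) τ]
    ring
  rw [Finset.sum_congr rfl fun j' _ => hR j', Finset.sum_comm]
  refine Finset.sum_congr rfl fun j' _ => ?_
  rw [Finset.sum_mul]
  refine Finset.sum_congr rfl fun j _ => ?_
  rw [ite_mul, zero_mul]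
  by_cases hc : l' = l ∧ k' = k ∧ (L'.get j').1 = (L.get j).1 ∧
      (↑(L'.eraseIdx j') : Multiset (Odx Lp d × S.V)) = ↑(L.eraseIdx j)
  · obtain ⟨h1, h2, h3, h4⟩ := hc
    rw [if_pos ⟨h1, h2, h3, h4⟩, if_pos ⟨h1.symm, h2.symm, h3.symm, h4.symm⟩, h2, h4]
    linear_combination ((mfact k : ℝ) * (Wfac S sym ↑(L.eraseIdx j) : ℝ)) * IH j' τ ((L.get j).2)
  · rw [if_neg hc, if_neg (fun hh => hc ⟨hh.1.symm, hh.2.1.symm, hh.2.2.1.symm, hh.2.2.2.symm⟩)]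

end Statement15Main

section Statement15Root

variable {d : ℕ} {Lp Dr : Type} [DecidableEq Lp]
variable (S : TreeV Lp Dr d) [DecidableEq S.V] (sym : S.V → ℕ)

private lemma msum_apply {β : Type*} (m : MIdx d) (F : MIdx d → (β →₀ ℝ)) (z : β) :
    (msum m F) z = msum m fun ℓ => F ℓ z := by
  unfold msum
  rw [Finset.sum_apply']

private lemma claim_root (hsym : S.SymSpec sym) (t : Lp) (p : MIdx d) (l l' : Dr)
    (k k' : MIdx d) (L L' : List (Odx Lp d × S.V)) (τ : S.V) :
    (msum (k ⊓ p) fun ℓ => (mchoose k ℓ : ℝ) •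
        Finsupp.single (S.node l (k - ℓ)
          (((t, p - ℓ), τ) ::ₘ (↑L : Multiset (Odx Lp d × S.V)))) 1)
        (S.node l' k' ↑L') * (sym (S.node l' k' ↑L') : ℝ)
    = (∑ j' : Fin L'.length,
        if (L'.get j').1.1 = t ∧ (L'.get j').1.2 ≤ p then
          ((mfact (p - (L'.get j').1.2) : ℝ))⁻¹ •
            Finsupp.single ((L'.get j').2,
              S.node l' (k' + (p - (L'.get j').1.2)) ↑(L'.eraseIdx j')) 1
        else 0) (τ, S.node l k ↑L) * ((sym τ : ℝ) * (sym (S.node l k ↑L) : ℝ)) := by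
  classical
  rw [msum_apply, Finset.sum_apply']
  by_cases hl : l = l'
  · subst hl
    by_cases H : ∃ ℓ : MIdx d, ℓ ≤ k ∧ ℓ ≤ p ∧ k - ℓ = k' ∧
        (↑L' : Multiset (Odx Lp d × S.V)) = ((t, p - ℓ), τ) ::ₘ ↑L
    · obtain ⟨ℓ₀, hk0, hp0, hk', hL'⟩ := H
      have hLHS : (msum (k ⊓ p) fun ℓ => ((mchoose k ℓ : ℝ) •
          Finsupp.single (S.node l (k - ℓ)
            (((t, p - ℓ), τ) ::ₘ (↑L : Multiset (Odx Lp d × S.V)))) (1:ℝ)) (S.node l k' ↑L'))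
          = (mchoose k ℓ₀ : ℝ) := by
        refine msum_eq_of (k ⊓ p) ℓ₀ (le_inf hk0 hp0) _ _ fun ℓ hℓ => ?_
        rw [Finsupp.smul_apply, Finsupp.single_apply, smul_eq_mul]
        by_cases he : S.node l (k - ℓ)
            (((t, p - ℓ), τ) ::ₘ (↑L : Multiset (Odx Lp d × S.V))) = S.node l k' ↑L'
        · obtain ⟨-, h2, h3⟩ := node_inj S he
          rw [hL'] at h3
          have h4 := (Multiset.cons_inj_left _).mp h3
          have h5 : p - ℓ = p - ℓ₀ := congrArg (fun x => x.1.2) h4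
          have hll : ℓ = ℓ₀ := by
            funext i
            have e1 : p i - ℓ i = p i - ℓ₀ i := congrFun h5 i
            have e2 : ℓ i ≤ p i := (le_inf_iff.mp hℓ).2 i
            have e3 : ℓ₀ i ≤ p i := hp0 i
            omega
          rw [if_pos he, if_pos hll, hll, mul_one]
        · rw [if_neg he, mul_zero, if_neg]
          intro hll
          exact he (by rw [hll, hk', hL'])
      rw [hLHS]
      have hRHS : ∀ j' : Fin L'.length,
          ((if (L'.get j').1.1 = t ∧ (L'.get j').1.2 ≤ p then
            ((mfact (p - (L'.get j').1.2) : ℝ))⁻¹ •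
              Finsupp.single ((L'.get j').2,
                S.node l (k' + (p - (L'.get j').1.2)) ↑(L'.eraseIdx j')) 1
          else 0) (τ, S.node l k ↑L))
          = if L'.get j' = ((t, p - ℓ₀), τ) then ((mfact ℓ₀ : ℝ))⁻¹ else 0 := by
        intro j'
        by_cases hj : L'.get j' = ((t, p - ℓ₀), τ)
        · rw [if_pos hj]
          have hq : (L'.get j').1.2 = p - ℓ₀ := by rw [hj]
          have hcond : (L'.get j').1.1 = t ∧ (L'.get j').1.2 ≤ p :=
            ⟨by rw [hj], by rw [hq]; exact fun i => Nat.sub_le (p i) (ℓ₀ i)⟩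
          rw [if_pos hcond, Finsupp.smul_apply, Finsupp.single_apply, smul_eq_mul]
          have hpp : p - (L'.get j').1.2 = ℓ₀ := by
            rw [hq]; funext i
            have e4 : ℓ₀ i ≤ p i := hp0 i
            show p i - (p i - ℓ₀ i) = ℓ₀ i
            omega
          have hkk : k' + (p - (L'.get j').1.2) = k := by
            rw [hpp]; funext i
            have e1 : k i - ℓ₀ i = k' i := congrFun hk' i
            have e2 : ℓ₀ i ≤ k i := hk0 i
            show k' i + ℓ₀ i = k i
            omega
          have hLL : (↑(L'.eraseIdx j') : Multiset (Odx Lp d × S.V)) = ↑L := by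
            have h5 := cons_eraseIdx L' j'
            rw [hj, hL'] at h5
            exact (Multiset.cons_inj_right _).mp h5
          rw [if_pos, hpp, mul_one]
          refine Prod.ext ?_ ?_
          · show (L'.get j').2 = τ
            rw [hj]
          · show S.node l (k' + (p - (L'.get j').1.2)) ↑(L'.eraseIdx j') = S.node l k ↑L
            rw [hkk, hLL]
        · rw [if_neg hj]
          by_cases hcond : (L'.get j').1.1 = t ∧ (L'.get j').1.2 ≤ p
          · rw [if_pos hcond, Finsupp.smul_apply, Finsupp.single_apply, smul_eq_mul,
              if_neg, mul_zero]
            intro hpair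
            have h7 : S.node l (k' + (p - (L'.get j').1.2)) ↑(L'.eraseIdx j')
                = S.node l k ↑L := congrArg Prod.snd hpair
            obtain ⟨-, h8, h9⟩ := node_inj S h7
            have h10 := cons_eraseIdx L' j'
            rw [h9, hL'] at h10
            exact hj ((Multiset.cons_inj_left _).mp h10)
          · rw [if_neg hcond]
            simp
      rw [Finset.sum_congr rfl fun j' _ => hRHS j', sum_if_get_eq,
        sym_node S sym hsym l k' (↑L'), sym_node S sym hsym l k (↑L), hL', Wfac_cons,
        Multiset.count_cons_self]
      have hmne : (mfact ℓ₀ : ℝ) ≠ 0 := Nat.cast_ne_zero.mpr (mfact_pos' ℓ₀).ne'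
      have key : (mchoose k ℓ₀ : ℝ) * ((mfact ℓ₀ : ℝ) * (mfact k' : ℝ)) = (mfact k : ℝ) := by
        rw [← hk']
        exact_mod_cast mchoose_mul_mfact hk0
      have hkne : (mfact k : ℝ) ≠ 0 := Nat.cast_ne_zero.mpr (mfact_pos' k).ne'
      have hinv : ((mfact ℓ₀ : ℝ))⁻¹ = (mchoose k ℓ₀ : ℝ) * (mfact k' : ℝ) / (mfact k : ℝ) := by
        rw [eq_div_iff hkne, ← key]
        field_simp
      rw [hinv]
      set n := Multiset.count ((t, p - ℓ₀), τ) (↑L : Multiset (Odx Lp d × S.V)) with hn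
      push_cast
      field_simp
    · have hLHS : (msum (k ⊓ p) fun ℓ => ((mchoose k ℓ : ℝ) •
          Finsupp.single (S.node l (k - ℓ)
            (((t, p - ℓ), τ) ::ₘ (↑L : Multiset (Odx Lp d × S.V)))) (1:ℝ)) (S.node l k' ↑L'))
          = 0 := by
        refine msum_eq_zero _ _ fun ℓ hℓ => ?_
        rw [Finsupp.smul_apply, Finsupp.single_apply, smul_eq_mul]
        rw [if_neg, mul_zero]
        intro he
        obtain ⟨-, h2, h3⟩ := node_inj S he
        exact H ⟨ℓ, (le_inf_iff.mp hℓ).1, (le_inf_iff.mp hℓ).2, h2, h3.symm⟩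
      rw [hLHS, zero_mul]
      symm
      rw [Finset.sum_eq_zero, zero_mul]
      intro j' _
      by_cases hcond : (L'.get j').1.1 = t ∧ (L'.get j').1.2 ≤ p
      · rw [if_pos hcond, Finsupp.smul_apply, Finsupp.single_apply, smul_eq_mul, if_neg,
          mul_zero]
        intro hpair
        have h6 : (L'.get j').2 = τ := congrArg Prod.fst hpair
        have h7 : S.node l (k' + (p - (L'.get j').1.2)) ↑(L'.eraseIdx j')
            = S.node l k ↑L := congrArg Prod.snd hpair
        obtain ⟨-, h8, h9⟩ := node_inj S h7
        refine H ⟨p - (L'.get j').1.2, ?_, fun i => Nat.sub_le (p i) _, ?_, ?_⟩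
        · intro i
          have e5 : k' i + (p i - (L'.get j').1.2 i) = k i := congrFun h8 i
          show p i - (L'.get j').1.2 i ≤ k i
          omega
        · funext i
          have e5 : k' i + (p i - (L'.get j').1.2 i) = k i := congrFun h8 i
          show k i - (p i - (L'.get j').1.2 i) = k' i
          omega
        · have hpq : p - (p - (L'.get j').1.2) = (L'.get j').1.2 := by
            funext i
            have e6 : (L'.get j').1.2 i ≤ p i := hcond.2 i
            show p i - (p i - (L'.get j').1.2 i) = (L'.get j').1.2 i
            omega
          rw [hpq]
          have h10 := cons_eraseIdx L' j'
          rw [h9] at h10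
          rw [← h10]
          congr 1
          rw [← h6, ← hcond.1]
      · rw [if_neg hcond]
        simp
  · have hLHS : (msum (k ⊓ p) fun ℓ => ((mchoose k ℓ : ℝ) •
        Finsupp.single (S.node l (k - ℓ)
          (((t, p - ℓ), τ) ::ₘ (↑L : Multiset (Odx Lp d × S.V)))) (1:ℝ)) (S.node l' k' ↑L'))
        = 0 := by
      refine msum_eq_zero _ _ fun ℓ hℓ => ?_
      rw [Finsupp.smul_apply, Finsupp.single_apply, smul_eq_mul, if_neg, mul_zero]
      intro he
      exact hl (node_inj S he).1
    rw [hLHS, zero_mul]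
    symm
    rw [Finset.sum_eq_zero, zero_mul]
    intro j' _
    by_cases hcond : (L'.get j').1.1 = t ∧ (L'.get j').1.2 ≤ p
    · rw [if_pos hcond, Finsupp.smul_apply, Finsupp.single_apply, smul_eq_mul, if_neg,
        mul_zero]
      intro hpair
      have h7 : S.node l' (k' + (p - (L'.get j').1.2)) ↑(L'.eraseIdx j')
          = S.node l k ↑L := congrArg Prod.snd hpair
      exact hl (node_inj S h7).1.symm
    · rw [if_neg hcond]
      simp

end Statement15Root

section Statement15Finish

variable {d : ℕ} {Lp Dr : Type} [DecidableEq Lp]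
variable (S : TreeV Lp Dr d) [DecidableEq S.V] (sym : S.V → ℕ)

private lemma graft_cut (hsym : S.SymSpec sym)
    (graft : Odx Lp d → S.V → S.V → (S.V →₀ ℝ)) (hgraft : S.GraftSpec graft)
    (cutV : Odx Lp d → S.V → (S.V × S.V →₀ ℝ)) (hcutV : S.CutSpec cutV) :
    ∀ (σ : S.V) (t : Lp) (p : MIdx d) (τ τb : S.V),
      ((graft (t, p) τ τb) σ) * (sym σ : ℝ)
        = ((cutV (t, p) σ) (τ, τb)) * (sym τ : ℝ) * (sym τb : ℝ) := by
  refine S.ind (fun σ => ∀ (t : Lp) (p : MIdx d) (τ τb : S.V),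
      ((graft (t, p) τ τb) σ) * (sym σ : ℝ)
        = ((cutV (t, p) σ) (τ, τb)) * (sym τ : ℝ) * (sym τb : ℝ)) ?_
  intro l' k' M' IHM t p τ τb
  obtain ⟨x, hx⟩ := S.node_bij.surjective τb
  obtain ⟨l, k, M⟩ := x
  have hx' : S.node l k M = τb := hx
  subst hx'
  rw [← Multiset.coe_toList M, ← Multiset.coe_toList M']
  rw [hgraft t p τ l k M.toList, hcutV t p l' k' M'.toList]
  rw [Finsupp.add_apply, Finsupp.add_apply]
  have h1 := claim_root S sym hsym t p l l' k k' M.toList M'.toList τ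
  have h2 := claim_branch S sym hsym graft cutV t p l l' k k' M.toList M'.toList τ
    (fun j' τ₀ τb₀ => IHM (M'.toList.get j')
      (Multiset.mem_toList.mp (M'.toList.get_mem _)) t p τ₀ τb₀)
  rw [add_mul, h1, h2]
  ring

private lemma raise_low (hsym : S.SymSpec sym)
    (raiseV : Fin (d+1) → S.V → (S.V →₀ ℝ)) (hraiseV : S.RaiseSpec raiseV)
    (lowV : Fin (d+1) → S.V → (S.V →₀ ℝ)) (hlowV : S.LowSpec lowV) :
    ∀ (τ : S.V) (i : Fin (d+1)) (τb : S.V),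
      ((raiseV i τb) τ) * (sym τ : ℝ) = ((lowV i τ) τb) * (sym τb : ℝ) := by
  refine S.ind (fun τ => ∀ (i : Fin (d+1)) (τb : S.V),
      ((raiseV i τb) τ) * (sym τ : ℝ) = ((lowV i τ) τb) * (sym τb : ℝ)) ?_
  intro l k M IHM i τb
  obtain ⟨x, hx⟩ := S.node_bij.surjective τb
  obtain ⟨lb, kb, Mb⟩ := x
  have hx' : S.node lb kb Mb = τb := hx
  subst hx'
  rw [← Multiset.coe_toList M, ← Multiset.coe_toList Mb]
  rw [hraiseV i lb kb Mb.toList, hlowV i l k M.toList]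
  rw [Finsupp.add_apply, Finsupp.add_apply, add_mul, add_mul]
  have hroot : (Finsupp.single (S.node lb (kb + munit i) ↑Mb.toList) (1:ℝ))
        (S.node l k ↑M.toList) * (sym (S.node l k ↑M.toList) : ℝ)
      = (((k i : ℝ) • Finsupp.single (S.node l (k - munit i) ↑M.toList) (1:ℝ))
          (S.node lb kb ↑Mb.toList)) * (sym (S.node lb kb ↑Mb.toList) : ℝ) := by
    rw [Finsupp.smul_apply, Finsupp.single_apply, Finsupp.single_apply, smul_eq_mul]
    by_cases h1 : S.node lb (kb + munit i) ↑Mb.toList = S.node l k ↑M.toList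
    · obtain ⟨hl, hk, hM⟩ := node_inj S h1
      subst hl
      have hsub : k - munit i = kb := by
        rw [← hk]; funext j
        show kb j + munit i j - munit i j = kb j
        omega
      have hcond2 : S.node lb (k - munit i) ↑M.toList = S.node lb kb ↑Mb.toList := by
        rw [hsub, hM]
      rw [if_pos h1, if_pos hcond2]
      have hki : k i = kb i + 1 := by
        rw [← hk]; show kb i + munit i i = kb i + 1; simp [munit]
      rw [hki, ← hk, ← hM, sym_node S sym hsym, sym_node S sym hsym, mfact_add_unit]
      push_cast
      ring
    · rw [if_neg h1, zero_mul]
      by_cases h2 : S.node l (k - munit i) ↑M.toList = S.node lb kb ↑Mb.toList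
      · obtain ⟨hl, hk, hM⟩ := node_inj S h2
        have hki : k i = 0 := by
          by_contra hne
          apply h1
          have hkk : kb + munit i = k := by
            rw [← hk]; funext j
            by_cases hj : j = i
            · subst hj
              show (k - munit j) j + munit j j = k j
              have e1 : munit (d := d) j j = 1 := by simp [munit]
              have e2 : (k - munit j) j = k j - munit j j := rfl
              rw [e1] at e2 ⊢
              rw [e2]
              omega
            · show (k - munit i) j + munit i j = k j
              have e1 : munit (d := d) i j = 0 := Pi.single_eq_of_ne hj 1
              have e2 : (k - munit i) j = k j - munit i j := rfl
              rw [e1] at e2 ⊢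
              rw [e2]
              omega
          rw [← hl, hkk, hM]
        rw [if_pos h2, hki]
        push_cast
        ring
      · rw [if_neg h2, mul_zero, zero_mul]
  have hbranch : (∑ j : Fin Mb.toList.length,
        S.replace lb kb Mb.toList j (raiseV i (Mb.toList.get j).2)) (S.node l k ↑M.toList)
        * (sym (S.node l k ↑M.toList) : ℝ)
      = (∑ j' : Fin M.toList.length,
          S.replace l k M.toList j' (lowV i (M.toList.get j').2)) (S.node lb kb ↑Mb.toList)
        * (sym (S.node lb kb ↑Mb.toList) : ℝ) := by
    rw [Finset.sum_apply', Finset.sum_apply', Finset.sum_mul, Finset.sum_mul]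
    rw [Finset.sum_congr rfl fun j _ =>
      replace_eval S sym hsym l lb k kb M.toList Mb.toList j _]
    rw [Finset.sum_congr rfl fun j' _ =>
      replace_eval S sym hsym lb l kb k Mb.toList M.toList j' _]
    rw [Finset.sum_comm]
    refine Finset.sum_congr rfl fun j' _ => Finset.sum_congr rfl fun j => ?_
    intro _
    by_cases hc : l = lb ∧ k = kb ∧ (M.toList.get j').1 = (Mb.toList.get j).1 ∧
        (↑(M.toList.eraseIdx j') : Multiset (Odx Lp d × S.V)) = ↑(Mb.toList.eraseIdx j)
    · obtain ⟨e1, e2, e3, e4⟩ := hc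
      rw [if_pos ⟨e1, e2, e3, e4⟩, if_pos ⟨e1.symm, e2.symm, e3.symm, e4.symm⟩, e2, e4]
      have hIH := IHM (M.toList.get j') (Multiset.mem_toList.mp (M.toList.get_mem _)) i
        ((Mb.toList.get j).2)
      linear_combination ((mfact kb : ℝ)
        * (Wfac S sym ↑(Mb.toList.eraseIdx j) : ℝ)) * hIH
    · rw [if_neg hc,
        if_neg (fun hh => hc ⟨hh.1.symm, hh.2.1.symm, hh.2.2.1.symm, hh.2.2.2.symm⟩)]
  rw [hroot, hbranch]

end Statement15Finish

/-- Definitions `def_grafting_explicit`, `def_increasing_poly` and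
Remark `rem:formula for hgraft`: duality between grafting/raising and cutting/lowering
on `𝕍`, with respect to the inner product for which distinct trees are orthogonal and
`⟨τ,τ⟩ = S(τ)`: `⟨τ ⋖̂_{(𝔱,p)} τ̄, σ⟩ = ⟨τ ⊗ τ̄, ⋖̂*_{(𝔱,p)} σ⟩` and
`⟨↑̂_i τ̄, τ⟩ = ⟨τ̄, ↑̂*_i τ⟩`. -/
theorem statement15
    {d : ℕ} {Lp Dr : Type} [Fintype Lp] [DecidableEq Lp]
    (S : TreeV Lp Dr d) [DecidableEq S.V]
    (sym : S.V → ℕ) (hsym : S.SymSpec sym)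
    (graft : Odx Lp d → S.V → S.V → (S.V →₀ ℝ)) (hgraft : S.GraftSpec graft)
    (cutV : Odx Lp d → S.V → (S.V × S.V →₀ ℝ)) (hcutV : S.CutSpec cutV)
    (raiseV : Fin (d+1) → S.V → (S.V →₀ ℝ)) (hraiseV : S.RaiseSpec raiseV)
    (lowV : Fin (d+1) → S.V → (S.V →₀ ℝ)) (hlowV : S.LowSpec lowV) :
    (∀ (t : Lp) (p : MIdx d) (τ τb σ : S.V),
      ((graft (t, p) τ τb).sum fun τ'' c => c * (if τ'' = σ then (sym τ'' : ℝ) else 0)) =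
        (cutV (t, p) σ).sum fun ab c =>
          c * ((if τ = ab.1 then (sym τ : ℝ) else 0) *
            (if τb = ab.2 then (sym τb : ℝ) else 0))) ∧
    ∀ (i : Fin (d+1)) (τ τb : S.V),
      ((raiseV i τb).sum fun τ'' c => c * (if τ'' = τ then (sym τ'' : ℝ) else 0)) =
        (lowV i τ).sum fun τ'' c => c * (if τb = τ'' then (sym τb : ℝ) else 0) := by
  constructor
  · intro t p τ τb σ
    rw [pair_sum sym (graft (t, p) τ τb) σ, pair_sum2 sym (cutV (t, p) σ) τ τb]
    exact graft_cut S sym hsym graft hgraft cutV hcutV σ t p τ τb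
  · intro i τ τb
    rw [pair_sum sym (raiseV i τb) τ, pair_sum_flip sym (lowV i τ) τb]
    exact raise_low S sym hsym raiseV hraiseV lowV hlowV τ i τb

end SPDERenorm
end
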